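/- arXiv:2406.03458 — 2 statements merged into one kernel-verified Lean document; each statement's English description precedes it below -/
import Mathlib

section
/- Let S = S_c ∪ S_p and S' = S'_c ∪ S'_p be two independent samples, each with n ≥ 13/ε² clean examples drawn i.i.d. from 𝒟 and m ≥ (32/ε²)·log(200/ε) perturbations drawn i.i.d. from each u ∈ 𝒰(x) for each clean example (x,y). Let A be the event that there exists h ∈ ℋ with DR_S(h) = 0 but DR_𝒟(h) ≥ ε, and let B be the event that there exists h ∈ ℋ with DR_S(h) = 0 but DR_{S'}(h) ≥ ε/2. Then P(B) ≥ (2/5)·P(A). -/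
open MeasureTheory

/-- Distributional adversarial loss `DR_D(h)`, where the perturbation set of `x` is the
finite family of distributions `{U x j : j < k}` (so `|U(x)| ≤ k`):
`DR_D(h) = E_{(x,y)∼D}[ max_{u ∈ U(x)} E_{z∼u} 1[h(z) ≠ y] ]`. -/
noncomputable def trueDR {X : Type*} [MeasurableSpace X] {k : ℕ}
    (D : Measure (X × Bool)) (U : X → Fin k → Measure X) (h : X → Bool) : ℝ :=
  ∫ xy, ⨆ j : Fin k, ((U xy.1 j) {z | h z ≠ xy.2}).toReal ∂D

/-- Empirical distributional adversarial loss of `h` on the sample `(Sc, Sp)` where `Sc` is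
the clean sample and `Sp i j l` is the `l`-th perturbation of the `i`-th clean example
drawn from its `j`-th perturbation distribution:
`DR_S(h) = (1/n) Σ_i max_j (1/m) Σ_l 1[h(Sp i j l) ≠ yᵢ]`. -/
noncomputable def empDR {X : Type*} {k n m : ℕ}
    (h : X → Bool) (Sc : Fin n → X × Bool) (Sp : Fin n → Fin k → Fin m → X) : ℝ :=
  (1 / (n : ℝ)) * ∑ i : Fin n, ⨆ j : Fin k,
    (1 / (m : ℝ)) * ∑ l : Fin m, (if h (Sp i j l) ≠ (Sc i).2 then (1 : ℝ) else 0)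

/-- Distribution of the training sample `S = S_c ∪ S_p`: `n` i.i.d. clean examples from `D`,
and, conditionally on the clean sample, for each clean example `(x,y)` and each `j < k`,
`m` i.i.d. perturbations drawn from `U x j`. -/
noncomputable def sampleMeasure {X : Type*} [MeasurableSpace X] {k : ℕ}
    (D : Measure (X × Bool)) (U : X → Fin k → Measure X) (n m : ℕ) :
    Measure ((Fin n → X × Bool) × (Fin n → Fin k → Fin m → X)) :=
  (Measure.pi fun _ : Fin n => D).bind fun sc =>
    (Measure.pi fun i : Fin n =>
        Measure.pi fun j : Fin k =>
          Measure.pi fun _ : Fin m => U (sc i).1 j).map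
      fun sp => (sc, sp)

set_option linter.unusedSectionVars false
set_option linter.unusedVariables false
set_option maxHeartbeats 1000000
open Set
open scoped ENNReal NNReal

section
variable {ι : Type*} [Fintype ι] {α : ι → Type*} [∀ i, MeasurableSpace (α i)]
  (μ : ∀ i, Measure (α i)) [∀ i, IsProbabilityMeasure (μ i)]

lemma pi_map_eval (i : ι) : (Measure.pi μ).map (Function.eval i) = μ i := by
  classical
  ext s hs
  rw [Measure.map_apply (measurable_pi_apply i) hs, Set.eval_preimage, Measure.pi_pi,
    Fintype.prod_eq_single i (fun j hj => by simp [Function.update_of_ne hj])]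
  simp

lemma pi_integral_eval {i : ι} {F : α i → ℝ} (hF : AEStronglyMeasurable F (μ i)) :
    ∫ x, F (x i) ∂Measure.pi μ = ∫ a, F a ∂μ i := by
  rw [← pi_map_eval μ i, integral_map (measurable_pi_apply i).aemeasurable]
  rw [pi_map_eval μ i]; exact hF

lemma pi_map_pair {i j : ι} (hij : i ≠ j) :
    (Measure.pi μ).map (fun x => (x i, x j)) = (μ i).prod (μ j) := by
  classical
  refine (Measure.prod_eq fun s t hs ht => ?_).symm
  rw [Measure.map_apply ((measurable_pi_apply i).prodMk (measurable_pi_apply j)) (hs.prod ht)]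
  have hpre : (fun x : ∀ r, α r => (x i, x j)) ⁻¹' (s ×ˢ t)
      = Set.pi Set.univ (Function.update (Function.update (fun r => (Set.univ : Set (α r))) i s) j t) := by
    ext x
    simp only [Set.mem_preimage, Set.mem_prod, Set.mem_pi, Set.mem_univ, true_implies]
    constructor
    · rintro ⟨hxs, hxt⟩ r
      rcases eq_or_ne r j with rfl | hrj
      · simpa using hxt
      rcases eq_or_ne r i with rfl | hri
      · simp [Function.update_of_ne hij, hxs]
      · simp [Function.update_of_ne hrj, Function.update_of_ne hri]
    · intro hx
      refine ⟨?_, ?_⟩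
      · have := hx i; simpa [Function.update_of_ne hij] using this
      · have := hx j; simpa using this
  rw [hpre, Measure.pi_pi]
  have hsub : ∀ r ∈ (Finset.univ : Finset ι), r ∉ ({i, j} : Finset ι) →
      μ r (Function.update (Function.update (fun r => (Set.univ : Set (α r))) i s) j t r) = 1 := by
    intro r _ hr
    simp only [Finset.mem_insert, Finset.mem_singleton, not_or] at hr
    simp [Function.update_of_ne hr.2, Function.update_of_ne hr.1]
  rw [← Finset.prod_subset (Finset.subset_univ ({i,j} : Finset ι)) hsub,
    Finset.prod_insert (by simpa using hij)]
  simp [Function.update_of_ne hij]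

lemma pi_integral_pair {i j : ι} (hij : i ≠ j) {F : α i → ℝ} {G : α j → ℝ}
    (hF : Measurable F) (hG : Measurable G) :
    ∫ x, F (x i) * G (x j) ∂Measure.pi μ = (∫ a, F a ∂μ i) * ∫ a, G a ∂μ j := by
  have hmeas : Measurable (fun x : ∀ r, α r => (x i, x j)) :=
    (measurable_pi_apply i).prodMk (measurable_pi_apply j)
  have : ∫ x, F (x i) * G (x j) ∂Measure.pi μ
      = ∫ p : α i × α j, F p.1 * G p.2 ∂((μ i).prod (μ j)) := by
    rw [← pi_map_pair μ hij, integral_map hmeas.aemeasurable]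
    exact ((hF.comp measurable_fst).mul (hG.comp measurable_snd)).aestronglyMeasurable
  rw [this, integral_prod_mul]

end

lemma integrable_of_bdd' {β : Type*} [MeasurableSpace β] {μ : Measure β} [IsFiniteMeasure μ]
    {f : β → ℝ} (hf : AEStronglyMeasurable f μ) {C : ℝ} (h : ∀ a, |f a| ≤ C) :
    Integrable f μ :=
  (integrable_const C).mono' hf (ae_of_all _ (by simpa using h))

/-- Second moment bound for an average of independent `[0,1]`-valued functions. -/
lemma avgVar {N : ℕ} (hN : 1 ≤ N) {α : Fin N → Type*} [∀ i, MeasurableSpace (α i)]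
    (μ : ∀ i, Measure (α i)) [∀ i, IsProbabilityMeasure (μ i)]
    (q : ∀ i, α i → ℝ) (hq : ∀ i, Measurable (q i))
    (hq0 : ∀ i a, 0 ≤ q i a) (hq1 : ∀ i a, q i a ≤ 1) (b : ℝ) :
    ∫ x, ((1 / (N : ℝ)) * ∑ i, q i (x i) - b) ^ 2 ∂Measure.pi μ
      ≤ 1 / (4 * (N : ℝ)) + ((1 / (N : ℝ)) * (∑ i, ∫ a, q i a ∂μ i) - b) ^ 2 := by
  classical
  have hNpos : (0 : ℝ) < N := by exact_mod_cast hN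
  set π := Measure.pi μ with hπ
  set Q : Fin N → ℝ := fun i => ∫ a, q i a ∂μ i with hQ
  have hQ0 : ∀ i, 0 ≤ Q i := fun i => integral_nonneg (hq0 i)
  have hQ1 : ∀ i, Q i ≤ 1 := by
    intro i
    calc ∫ a, q i a ∂μ i ≤ ∫ _a, (1:ℝ) ∂μ i :=
      integral_mono (integrable_of_bdd' (hq i).aestronglyMeasurable (C := 1)
        (fun a => abs_le.2 ⟨by linarith [hq0 i a], hq1 i a⟩)) (integrable_const 1) (hq1 i)
    _ = 1 := by simp
  -- basic measurability / integrability
  have hqe : ∀ i, Measurable fun x : ∀ r, α r => q i (x i) :=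
    fun i => (hq i).comp (measurable_pi_apply i)
  have hqeb : ∀ i, Integrable (fun x : ∀ r, α r => q i (x i)) π :=
    fun i => integrable_of_bdd' (hqe i).aestronglyMeasurable (C := 1)
      (fun x => abs_le.2 ⟨by linarith [hq0 i (x i)], hq1 i (x i)⟩)
  have hqq : ∀ i j, Integrable (fun x : ∀ r, α r => q i (x i) * q j (x j)) π := by
    intro i j
    refine integrable_of_bdd' ((hqe i).mul (hqe j)).aestronglyMeasurable (C := 1) fun x => ?_
    rw [abs_mul]
    have := abs_le.2 ⟨by linarith [hq0 i (x i)], hq1 i (x i)⟩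
    have := abs_le.2 ⟨by linarith [hq0 j (x j)], hq1 j (x j)⟩
    nlinarith [abs_nonneg (q i (x i)), abs_nonneg (q j (x j))]
  set S : (∀ r, α r) → ℝ := fun x => ∑ i, q i (x i) with hS
  have hSmeas : Measurable S := by
    apply Finset.measurable_sum
    intro i _
    exact hqe i
  have hSint : Integrable S π := integrable_finset_sum _ fun i _ => hqeb i
  have hI1 : ∫ x, S x ∂π = ∑ i, Q i := by
    rw [integral_finset_sum _ fun i _ => hqeb i]
    exact Finset.sum_congr rfl fun i _ => pi_integral_eval μ (hq i).aestronglyMeasurable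
  -- second moment of the sum
  have hSsq_int : Integrable (fun x => S x * S x) π := by
    have : (fun x => S x * S x) = fun x => ∑ i, ∑ j, q i (x i) * q j (x j) := by
      funext x
      rw [Finset.sum_mul_sum]
    rw [this]
    exact integrable_finset_sum _ fun i _ => integrable_finset_sum _ fun j _ => hqq i j
  have hI2 : ∫ x, S x * S x ∂π ≤ ∑ i, (Q i - Q i ^ 2) + (∑ i, Q i) ^ 2 := by
    have hexp : ∫ x, S x * S x ∂π = ∑ i, ∑ j, ∫ x, q i (x i) * q j (x j) ∂π := by
      have : (fun x => S x * S x) = fun x => ∑ i, ∑ j, q i (x i) * q j (x j) := by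
        funext x; rw [Finset.sum_mul_sum]
      rw [this, integral_finset_sum _ fun i _ => integrable_finset_sum _ fun j _ => hqq i j]
      exact Finset.sum_congr rfl fun i _ =>
        integral_finset_sum _ fun j _ => hqq i j
    rw [hexp]
    have hrow : ∀ i, ∑ j, ∫ x, q i (x i) * q j (x j) ∂π
        ≤ (Q i - Q i ^ 2) + Q i * ∑ j, Q j := by
      intro i
      rw [← Finset.add_sum_erase _ _ (Finset.mem_univ i)]
      have hoff : ∑ j ∈ Finset.univ.erase i, ∫ x, q i (x i) * q j (x j) ∂π
          = ∑ j ∈ Finset.univ.erase i, Q i * Q j := by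
        refine Finset.sum_congr rfl fun j hj => ?_
        exact pi_integral_pair μ (Finset.ne_of_mem_erase hj).symm (hq i) (hq j)
      rw [hoff]
      have hdiag : ∫ x, q i (x i) * q i (x i) ∂π ≤ Q i := by
        calc ∫ x, q i (x i) * q i (x i) ∂π ≤ ∫ x, q i (x i) ∂π := by
              refine integral_mono (hqq i i) (hqeb i) fun x => ?_
              nlinarith [hq0 i (x i), hq1 i (x i)]
        _ = Q i := pi_integral_eval μ (hq i).aestronglyMeasurable
      have herase : ∑ j ∈ Finset.univ.erase i, Q i * Q j
          = Q i * ∑ j, Q j - Q i ^ 2 := by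
        have hQsum : ∑ j : Fin N, Q j = Q i + ∑ j ∈ Finset.univ.erase i, Q j :=
          (Finset.add_sum_erase _ _ (Finset.mem_univ i)).symm
        rw [← Finset.mul_sum, hQsum]
        ring
      rw [herase]
      linarith [hdiag]
    calc ∑ i, ∑ j, ∫ x, q i (x i) * q j (x j) ∂π
        ≤ ∑ i, ((Q i - Q i ^ 2) + Q i * ∑ j, Q j) := Finset.sum_le_sum fun i _ => hrow i
    _ = ∑ i, (Q i - Q i ^ 2) + (∑ i, Q i) ^ 2 := by
        rw [Finset.sum_add_distrib, ← Finset.sum_mul]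
        ring
  -- put things together
  have hsplit : ∫ x, ((1 / (N : ℝ)) * S x - b) ^ 2 ∂π
      = (1 / (N : ℝ))^2 * ∫ x, S x * S x ∂π - 2 * b * (1 / (N : ℝ)) * (∑ i, Q i) + b ^ 2 := by
    have hexpand : (fun x => ((1 / (N : ℝ)) * S x - b) ^ 2)
        = fun x => (1 / (N : ℝ))^2 * (S x * S x) - (2 * b * (1 / (N : ℝ))) * S x + b ^ 2 := by
      funext x; ring
    rw [hexpand]
    have hint1 : Integrable (fun x => (1 / (N : ℝ))^2 * (S x * S x)) π := hSsq_int.const_mul _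
    have hint2 : Integrable (fun x => (2 * b * (1 / (N : ℝ))) * S x) π := hSint.const_mul _
    have hint3 : Integrable (fun x => (1 / (N : ℝ))^2 * (S x * S x)
        - (2 * b * (1 / (N : ℝ))) * S x) π := hint1.sub hint2
    rw [integral_add hint3 (integrable_const _), integral_sub hint1 hint2,
      integral_const_mul, integral_const_mul, hI1, integral_const]
    simp [measure_univ]
  rw [hsplit]
  have hsum14 : ∑ i, (Q i - Q i ^ 2) ≤ (N : ℝ) / 4 := by
    calc ∑ i, (Q i - Q i ^ 2) ≤ ∑ _i : Fin N, (1/4 : ℝ) :=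
      Finset.sum_le_sum fun i _ => by nlinarith [hQ0 i, hQ1 i, sq_nonneg (Q i - 1/2)]
    _ = (N : ℝ)/4 := by
      rw [Finset.sum_const]
      simp
      ring
  have h2 : (1 / (N : ℝ))^2 * ∫ x, S x * S x ∂π
      ≤ (1 / (N : ℝ))^2 * (∑ i, (Q i - Q i ^ 2) + (∑ i, Q i) ^ 2) := by
    apply mul_le_mul_of_nonneg_left hI2 (by positivity)
  have hfin : (1 / (N : ℝ))^2 * (∑ i, (Q i - Q i ^ 2) + (∑ i, Q i) ^ 2)
      - 2 * b * (1 / (N : ℝ)) * (∑ i, Q i) + b ^ 2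
      ≤ 1 / (4 * (N : ℝ)) + ((1 / (N : ℝ)) * (∑ i, Q i) - b) ^ 2 := by
    have h14 : (1 / (N : ℝ))^2 * (∑ i, (Q i - Q i ^ 2)) ≤ 1 / (4 * (N:ℝ)) := by
      have := mul_le_mul_of_nonneg_left hsum14 (le_of_lt (by positivity : (0:ℝ) < (1 / (N : ℝ))^2))
      calc (1 / (N : ℝ))^2 * (∑ i, (Q i - Q i ^ 2)) ≤ (1 / (N : ℝ))^2 * ((N:ℝ)/4) := this
      _ = 1 / (4 * (N:ℝ)) := by field_simp
    nlinarith [h14]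
  linarith [h2, hfin]



lemma extract_coord {β : Type*} [MeasurableSpace β] {n : ℕ}
    (μ : Measure β) [IsProbabilityMeasure μ] (g : β → ℝ)
    (hg0 : ∀ a, 0 ≤ g a) (hg1 : ∀ a, g a ≤ 1) (i : Fin (n + 1))
    (hae : AEMeasurable (fun x : Fin (n + 1) → β => g (x i)) (Measure.pi fun _ => μ)) :
    ∃ G : β → ℝ, Measurable G ∧ (∀ a, 0 ≤ G a) ∧ (∀ a, G a ≤ 1) ∧ g =ᵐ[μ] G := by
  classical
  set π : Measure (Fin (n+1) → β) := Measure.pi fun _ => μ with hπ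
  set ρ : Measure (Fin n → β) := Measure.pi fun _ => μ with hρ
  set e := MeasurableEquiv.piFinSuccAbove (fun _ : Fin (n+1) => β) i with he
  have hmp : MeasurePreserving e π (μ.prod ρ) :=
    measurePreserving_piFinSuccAbove (fun _ : Fin (n+1) => μ) i
  obtain ⟨G0, hG0meas, hG0ae⟩ := hae
  set G1 : (Fin (n+1) → β) → ℝ := fun x => max 0 (min 1 (G0 x)) with hG1
  have hG1meas : Measurable G1 := measurable_const.max (measurable_const.min hG0meas)
  have hG1b0 : ∀ x, 0 ≤ G1 x := fun x => le_max_left _ _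
  have hG1b1 : ∀ x, G1 x ≤ 1 := fun x => max_le zero_le_one (min_le_left _ _)
  have hG1ae : π {x | g (x i) ≠ G1 x} = 0 := by
    have : ∀ᵐ x ∂π, g (x i) = G1 x := by
      filter_upwards [hG0ae] with x hx
      have hx' : G0 x = g (x i) := hx.symm
      simp [hG1, hx', min_eq_right (hg1 (x i)), max_eq_right (hg0 (x i))]
    simpa [ae_iff] using this
  obtain ⟨N, hNsub, hNm, hN0⟩ := exists_measurable_superset_of_null hG1ae
  have key : (μ.prod ρ) (e.symm ⁻¹' N) = 0 := by
    calc (μ.prod ρ) (e.symm ⁻¹' N) = ((μ.prod ρ).map e.symm) N :=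
          (Measure.map_apply e.symm.measurable hNm).symm
    _ = π N := by rw [(hmp.symm e).map_eq]
    _ = 0 := hN0
  have hcoord : ∀ p : β × (Fin n → β), (e.symm p) i = p.1 := by
    intro p
    show (MeasurableEquiv.piFinSuccAbove (fun _ : Fin (n+1) => β) i).symm p i = p.1
    exact Fin.insertNth_apply_same (α := fun _ => β) i p.1 p.2
  have hnull : ∀ᵐ p ∂(μ.prod ρ), g p.1 = G1 (e.symm p) := by
    rw [ae_iff]
    refine measure_mono_null ?_ key
    intro p hp
    apply hNsub
    have : g ((e.symm p) i) ≠ G1 (e.symm p) := by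
      rw [hcoord p]; exact hp
    exact this
  have hsec : ∀ᵐ a ∂μ, ∀ᵐ r ∂ρ, g a = G1 (e.symm (a, r)) :=
    Measure.ae_ae_of_ae_prod hnull
  set H : β × (Fin n → β) → ℝ := fun p => G1 (e.symm p) with hH
  have hHmeas : Measurable H := hG1meas.comp e.symm.measurable
  refine ⟨fun a => ∫ r, H (a, r) ∂ρ,
    hHmeas.stronglyMeasurable.integral_prod_right'.measurable, ?_, ?_, ?_⟩
  · exact fun a => integral_nonneg fun r => hG1b0 _
  · intro a
    calc ∫ r, H (a, r) ∂ρ ≤ ∫ _r, (1 : ℝ) ∂ρ := by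
          refine integral_mono ?_ (integrable_const 1) fun r => hG1b1 _
          exact integrable_of_bdd' (hHmeas.comp measurable_prodMk_left).aestronglyMeasurable
            (C := 1) (fun r => abs_le.2 ⟨by linarith [hG1b0 (e.symm (a, r))], hG1b1 _⟩)
    _ = 1 := by simp
  · filter_upwards [hsec] with a ha
    have : ∫ r, H (a, r) ∂ρ = ∫ _r, g a ∂ρ :=
      integral_congr_ae (by filter_upwards [ha] with r hr; exact hr.symm)
    rw [this, integral_const]
    simp

lemma meas_sq_ge {W : Type*} [MeasurableSpace W] (μ : Measure W) [IsProbabilityMeasure μ]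
    {q : W → ℝ} (hq : AEMeasurable q μ) (hint : Integrable (fun w => q w ^ 2) μ)
    {c : ℝ} (hc : 0 < c) :
    μ {w | c ≤ q w ^ 2} ≤ ENNReal.ofReal ((∫ w, q w ^ 2 ∂μ) / c) := by
  have hq2 : AEMeasurable (fun w => ENNReal.ofReal (q w ^ 2)) μ :=
    ENNReal.measurable_ofReal.comp_aemeasurable (hq.pow_const 2)
  have h1 := mul_meas_ge_le_lintegral₀ hq2 (ENNReal.ofReal c)
  have h2 : ENNReal.ofReal c * μ {w | c ≤ q w ^ 2} ≤ ENNReal.ofReal (∫ w, q w ^ 2 ∂μ) := by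
    calc ENNReal.ofReal c * μ {w | c ≤ q w ^ 2}
        ≤ ENNReal.ofReal c * μ {x | ENNReal.ofReal c ≤ ENNReal.ofReal (q x ^ 2)} := by
          exact mul_le_mul_right (measure_mono fun w hw => ENNReal.ofReal_le_ofReal hw) _
    _ ≤ ∫⁻ x, ENNReal.ofReal (q x ^ 2) ∂μ := h1
    _ = ENNReal.ofReal (∫ w, q w ^ 2 ∂μ) :=
        (ofReal_integral_eq_lintegral_ofReal hint (ae_of_all _ fun w => sq_nonneg _)).symm
  rw [ENNReal.ofReal_div_of_pos hc,
    ENNReal.le_div_iff_mul_le (Or.inl (ENNReal.ofReal_pos.mpr hc).ne') (Or.inl ENNReal.ofReal_ne_top),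
    mul_comm]
  exact h2




section Defs
variable {X : Type*} [MeasurableSpace X] {k n m : ℕ}

noncomputable def Mf (h : X → Bool) (y : Bool) (v : Fin k → Fin m → X) : ℝ :=
  ⨆ j : Fin k, (1 / (m : ℝ)) * ∑ l : Fin m, (if h (v j l) ≠ y then (1 : ℝ) else 0)

lemma empDR_eq (h : X → Bool) (sc : Fin n → X × Bool) (sp : Fin n → Fin k → Fin m → X) :
    empDR h sc sp = (1 / (n : ℝ)) * ∑ i, Mf h (sc i).2 (sp i) := rfl

noncomputable def gam (U : X → Fin k → Measure X) (m : ℕ) (x : X) :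
    Measure (Fin k → Fin m → X) :=
  Measure.pi fun j => Measure.pi fun _ : Fin m => U x j

noncomputable def Bsc (U : X → Fin k → Measure X) (m : ℕ) (sc : Fin n → X × Bool) :
    Measure (Fin n → Fin k → Fin m → X) :=
  Measure.pi fun i => gam U m (sc i).1

noncomputable def sampK (U : X → Fin k → Measure X) (n m : ℕ) (sc : Fin n → X × Bool) :
    Measure ((Fin n → X × Bool) × (Fin n → Fin k → Fin m → X)) :=
  (Bsc U m sc).map fun sp => (sc, sp)

lemma sampleMeasure_eq (D : Measure (X × Bool)) (U : X → Fin k → Measure X) :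
    sampleMeasure D U n m = (Measure.pi fun _ : Fin n => D).bind (sampK U n m) := rfl

noncomputable def phiF (U : X → Fin k → Measure X) (m : ℕ) (h : X → Bool) (p : X × Bool) : ℝ :=
  ∫ v, Mf h p.2 v ∂gam U m p.1

noncomputable def ellF (U : X → Fin k → Measure X) (h : X → Bool) (p : X × Bool) : ℝ :=
  ⨆ j : Fin k, ((U p.1 j) {z | h z ≠ p.2}).toReal

lemma trueDR_eq (D : Measure (X × Bool)) (U : X → Fin k → Measure X) (h : X → Bool) :
    trueDR D U h = ∫ p, ellF U h p ∂D := rfl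

variable {U : X → Fin k → Measure X} {h : X → Bool}

lemma gam_prob (hU : ∀ x j, IsProbabilityMeasure (U x j)) (x : X) :
    IsProbabilityMeasure (gam U m x) := by
  have : ∀ j : Fin k, IsProbabilityMeasure (Measure.pi fun _ : Fin m => U x j) := by
    intro j
    haveI := hU x j
    infer_instance
  haveI := this
  unfold gam
  infer_instance

lemma Bsc_prob (hU : ∀ x j, IsProbabilityMeasure (U x j)) (sc : Fin n → X × Bool) :
    IsProbabilityMeasure (Bsc U m sc : Measure (Fin n → Fin k → Fin m → X)) := by
  haveI : ∀ i : Fin n, IsProbabilityMeasure (gam U m (sc i).1) := fun i => gam_prob hU _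
  unfold Bsc
  infer_instance

lemma meas_Mf (hh : Measurable h) (y : Bool) :
    Measurable (fun v : Fin k → Fin m → X => Mf h y v) := by
  apply Measurable.iSup
  intro j
  apply Measurable.const_mul
  apply Finset.measurable_sum
  intro l _
  refine Measurable.ite ?_ measurable_const measurable_const
  exact (hh.comp ((measurable_pi_apply l).comp (measurable_pi_apply j)))
    ((measurableSet_singleton y).compl)

lemma Mf_nonneg (y : Bool) (v : Fin k → Fin m → X) : 0 ≤ Mf h y v := by
  apply Real.iSup_nonneg
  intro j
  apply mul_nonneg (by positivity)
  apply Finset.sum_nonneg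
  intro l _
  split <;> norm_num

lemma Mf_le_one (y : Bool) (v : Fin k → Fin m → X) : Mf h y v ≤ 1 := by
  apply Real.iSup_le _ zero_le_one
  intro j
  rcases Nat.eq_zero_or_pos m with hm | hm
  · subst hm; simp
  have hsum : ∑ l : Fin m, (if h (v j l) ≠ y then (1:ℝ) else 0) ≤ (m : ℝ) := by
    calc ∑ l : Fin m, (if h (v j l) ≠ y then (1:ℝ) else 0) ≤ ∑ _l : Fin m, (1:ℝ) :=
      Finset.sum_le_sum fun l _ => by split <;> norm_num
    _ = (m : ℝ) := by simp
  have hmr : (0:ℝ) < m := by exact_mod_cast hm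
  calc (1 / (m:ℝ)) * ∑ l : Fin m, (if h (v j l) ≠ y then (1:ℝ) else 0)
      ≤ (1 / (m:ℝ)) * m := by
        apply mul_le_mul_of_nonneg_left hsum (by positivity)
  _ = 1 := by field_simp

lemma empDR_nonneg (sc : Fin n → X × Bool) (sp : Fin n → Fin k → Fin m → X) :
    0 ≤ empDR h sc sp := by
  rw [empDR_eq]
  apply mul_nonneg (by positivity)
  exact Finset.sum_nonneg fun i _ => Mf_nonneg _ _

lemma empDR_le_one (sc : Fin n → X × Bool) (sp : Fin n → Fin k → Fin m → X) :
    empDR h sc sp ≤ 1 := by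
  rw [empDR_eq]
  rcases Nat.eq_zero_or_pos n with hn | hn
  · subst hn; simp
  have hnr : (0:ℝ) < n := by exact_mod_cast hn
  have hsum : ∑ i : Fin n, Mf h (sc i).2 (sp i) ≤ (n:ℝ) := by
    calc ∑ i : Fin n, Mf h (sc i).2 (sp i) ≤ ∑ _i : Fin n, (1:ℝ) :=
      Finset.sum_le_sum fun i _ => Mf_le_one _ _
    _ = (n:ℝ) := by simp
  calc (1 / (n:ℝ)) * ∑ i, Mf h (sc i).2 (sp i) ≤ (1 / (n:ℝ)) * n :=
    mul_le_mul_of_nonneg_left hsum (by positivity)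
  _ = 1 := by field_simp

lemma meas_empDR (hh : Measurable h) :
    Measurable (fun s : (Fin n → X × Bool) × (Fin n → Fin k → Fin m → X) =>
      empDR h s.1 s.2) := by
  unfold empDR
  apply Measurable.const_mul
  apply Finset.measurable_sum
  intro i _
  apply Measurable.iSup
  intro j
  apply Measurable.const_mul
  apply Finset.measurable_sum
  intro l _
  refine Measurable.ite ?_ measurable_const measurable_const
  have h1 : Measurable fun s : (Fin n → X × Bool) × (Fin n → Fin k → Fin m → X) =>
      (h (s.2 i j l), (s.1 i).2) :=
    ((hh.comp ((measurable_pi_apply l).comp ((measurable_pi_apply j).comp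
        ((measurable_pi_apply i).comp measurable_snd)))).prodMk
      (measurable_snd.comp ((measurable_pi_apply i).comp measurable_fst)))
  have h2 : MeasurableSet {p : Bool × Bool | p.1 ≠ p.2} := (Set.toFinite _).measurableSet
  exact h1 h2

lemma meas_empDR_right (hh : Measurable h) (sc : Fin n → X × Bool) :
    Measurable (fun w : Fin n → Fin k → Fin m → X => empDR h sc w) := by
  unfold empDR
  apply Measurable.const_mul
  apply Finset.measurable_sum
  intro i _
  apply Measurable.iSup
  intro j
  apply Measurable.const_mul
  apply Finset.measurable_sum
  intro l _
  refine Measurable.ite ?_ measurable_const measurable_const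
  exact (hh.comp ((measurable_pi_apply l).comp ((measurable_pi_apply j).comp
    (measurable_pi_apply i)))) ((measurableSet_singleton ((sc i).2)).compl)

lemma meas_Mf_joint (hh : Measurable h) (i : Fin n) :
    Measurable (fun s : (Fin n → X × Bool) × (Fin n → Fin k → Fin m → X) =>
      Mf h (s.1 i).2 (s.2 i)) := by
  unfold Mf
  apply Measurable.iSup
  intro j
  apply Measurable.const_mul
  apply Finset.measurable_sum
  intro l _
  refine Measurable.ite ?_ measurable_const measurable_const
  have h1 : Measurable fun s : (Fin n → X × Bool) × (Fin n → Fin k → Fin m → X) =>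
      (h (s.2 i j l), (s.1 i).2) :=
    ((hh.comp ((measurable_pi_apply l).comp ((measurable_pi_apply j).comp
        ((measurable_pi_apply i).comp measurable_snd)))).prodMk
      (measurable_snd.comp ((measurable_pi_apply i).comp measurable_fst)))
  exact h1 ((Set.toFinite {p : Bool × Bool | p.1 ≠ p.2}).measurableSet)

lemma ellF_nonneg (p : X × Bool) : 0 ≤ ellF U h p :=
  Real.iSup_nonneg fun j => ENNReal.toReal_nonneg

lemma ellF_le_one (hU : ∀ x j, IsProbabilityMeasure (U x j)) (p : X × Bool) :
    ellF U h p ≤ 1 := by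
  apply Real.iSup_le _ zero_le_one
  intro j
  haveI := hU p.1 j
  have hle : (U p.1 j) {z | h z ≠ p.2} ≤ 1 := prob_le_one
  calc ((U p.1 j) {z | h z ≠ p.2}).toReal ≤ (1 : ℝ≥0∞).toReal :=
    ENNReal.toReal_mono (by simp) hle
  _ = 1 := by simp

lemma phiF_nonneg (p : X × Bool) : 0 ≤ phiF U m h p :=
  integral_nonneg fun v => Mf_nonneg _ _

lemma phiF_le_one (hU : ∀ x j, IsProbabilityMeasure (U x j)) (hh : Measurable h)
    (p : X × Bool) : phiF U m h p ≤ 1 := by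
  haveI := gam_prob (m := m) hU p.1
  calc phiF U m h p ≤ ∫ _v, (1:ℝ) ∂gam U m p.1 := by
        refine integral_mono ?_ (integrable_const 1) fun v => Mf_le_one _ _
        exact (integrable_const 1).mono' (meas_Mf hh p.2).aestronglyMeasurable
          (ae_of_all _ fun v => by
            rw [Real.norm_eq_abs, abs_le]
            exact ⟨by linarith [Mf_nonneg (h := h) p.2 v], Mf_le_one _ _⟩)
  _ = 1 := by simp

lemma Mf_integrable (hU : ∀ x j, IsProbabilityMeasure (U x j)) (hh : Measurable h)
    (y : Bool) (x : X) : Integrable (Mf h y) (gam U m x) := by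
  haveI := gam_prob (m := m) hU x
  exact (integrable_const 1).mono' (meas_Mf hh y).aestronglyMeasurable
    (ae_of_all _ fun v => by
      rw [Real.norm_eq_abs, abs_le]
      exact ⟨by linarith [Mf_nonneg (h := h) y v], Mf_le_one _ _⟩)

lemma ell_le_phi (hU : ∀ x j, IsProbabilityMeasure (U x j)) (hh : Measurable h)
    (hm : 1 ≤ m) (p : X × Bool) : ellF U h p ≤ phiF U m h p := by
  obtain ⟨x, y⟩ := p
  haveI := gam_prob (m := m) hU x
  apply Real.iSup_le _ (phiF_nonneg _)
  intro j
  have hsetm : MeasurableSet {z : X | h z ≠ y} := hh ((measurableSet_singleton y).compl)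
  -- the j-th empirical average integrates to the true mass
  have hterm_meas : Measurable fun v : Fin k → Fin m → X =>
      (1 / (m : ℝ)) * ∑ l : Fin m, (if h (v j l) ≠ y then (1:ℝ) else 0) := by
    apply Measurable.const_mul
    apply Finset.measurable_sum
    intro l _
    refine Measurable.ite ?_ measurable_const measurable_const
    exact (hh.comp ((measurable_pi_apply l).comp (measurable_pi_apply j)))
      ((measurableSet_singleton y).compl)
  have hl : ∀ l : Fin m, ∫ v, (if h (v j l) ≠ y then (1:ℝ) else 0) ∂gam U m x
      = ((U x j) {z | h z ≠ y}).toReal := by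
    intro l
    haveI := hU x j
    haveI : ∀ j' : Fin k, IsProbabilityMeasure (Measure.pi fun _ : Fin m => U x j') :=
      fun j' => by haveI := hU x j'; infer_instance
    have hmap : (gam U m x).map (fun v => v j l) = U x j := by
      calc (gam U m x).map (fun v => v j l)
          = ((gam U m x).map (Function.eval j)).map (Function.eval l) := by
            rw [Measure.map_map (measurable_pi_apply l) (measurable_pi_apply j)]
            rfl
      _ = (Measure.pi fun _ : Fin m => U x j).map (Function.eval l) := by
            rw [show (gam U m x).map (Function.eval j)
                = Measure.pi fun _ : Fin m => U x j from
              pi_map_eval (fun j' : Fin k => Measure.pi fun _ : Fin m => U x j') j]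
      _ = U x j := pi_map_eval (fun _ : Fin m => U x j) l
    calc ∫ v, (if h (v j l) ≠ y then (1:ℝ) else 0) ∂gam U m x
        = ∫ z, (if h z ≠ y then (1:ℝ) else 0) ∂U x j := by
          rw [← hmap, integral_map
            (show Measurable fun v : Fin k → Fin m → X => v j l from
              (measurable_pi_apply l).comp (measurable_pi_apply j)).aemeasurable]
          exact (Measurable.ite (hh ((measurableSet_singleton y).compl))
            measurable_const measurable_const).aestronglyMeasurable
    _ = ((U x j) {z | h z ≠ y}).toReal := by
          rw [show (fun z => if h z ≠ y then (1:ℝ) else 0)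
              = Set.indicator {z : X | h z ≠ y} (fun _ => (1:ℝ)) from by
            funext z; rw [Set.indicator_apply]; rfl]
          rw [integral_indicator_const _ hsetm]
          simp
          rfl
  have heval : ∫ v, (1 / (m : ℝ)) * ∑ l : Fin m, (if h (v j l) ≠ y then (1:ℝ) else 0)
      ∂gam U m x = ((U x j) {z | h z ≠ y}).toReal := by
    rw [integral_const_mul, integral_finset_sum]
    · rw [Finset.sum_congr rfl fun l _ => hl l, Finset.sum_const]
      simp only [Finset.card_univ, Fintype.card_fin, nsmul_eq_mul]
      have hmr : (0:ℝ) < m := by exact_mod_cast hm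
      field_simp
    · intro l _
      exact (integrable_const 1).mono'
        ((Measurable.ite ((hh.comp ((measurable_pi_apply l).comp (measurable_pi_apply j)))
            ((measurableSet_singleton y).compl)) measurable_const
          measurable_const).aestronglyMeasurable)
        (ae_of_all _ fun v => by rw [Real.norm_eq_abs]; split <;> norm_num)
  rw [← heval]
  refine integral_mono ?_ (Mf_integrable hU hh y x) fun v => ?_
  · exact (integrable_const 1).mono' hterm_meas.aestronglyMeasurable
      (ae_of_all _ fun v => by
        rw [Real.norm_eq_abs, abs_le]
        constructor
        · have : (0:ℝ) ≤ (1 / (m : ℝ)) * ∑ l : Fin m, (if h (v j l) ≠ y then (1:ℝ) else 0) := by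
            apply mul_nonneg (by positivity)
            exact Finset.sum_nonneg fun l _ => by split <;> norm_num
          linarith
        · rcases Nat.eq_zero_or_pos m with hm0 | hm0
          · subst hm0; simp
          have hmr : (0:ℝ) < m := by exact_mod_cast hm0
          have hsum : ∑ l : Fin m, (if h (v j l) ≠ y then (1:ℝ) else 0) ≤ (m : ℝ) := by
            calc ∑ l : Fin m, (if h (v j l) ≠ y then (1:ℝ) else 0) ≤ ∑ _l : Fin m, (1:ℝ) :=
              Finset.sum_le_sum fun l _ => by split <;> norm_num
            _ = (m : ℝ) := by simp
          calc (1 / (m:ℝ)) * ∑ l : Fin m, (if h (v j l) ≠ y then (1:ℝ) else 0)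
              ≤ (1 / (m:ℝ)) * m := mul_le_mul_of_nonneg_left hsum (by positivity)
          _ = 1 := by field_simp)
  · show (1 / (m : ℝ)) * ∑ l : Fin m, (if h (v j l) ≠ y then (1:ℝ) else 0)
        ≤ ⨆ j' : Fin k, (1 / (m : ℝ)) * ∑ l : Fin m, (if h (v j' l) ≠ y then (1:ℝ) else 0)
    exact le_ciSup (f := fun j' : Fin k => (1 / (m : ℝ)) *
      ∑ l : Fin m, (if h (v j' l) ≠ y then (1:ℝ) else 0))
      (Set.Finite.bddAbove (Set.finite_range _)) j

end Defs

section Core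
variable {X : Type*} [MeasurableSpace X] {k n m : ℕ}

lemma core_bound (D : Measure (X × Bool)) [IsProbabilityMeasure D]
    (U : X → Fin k → Measure X) (hU : ∀ x j, IsProbabilityMeasure (U x j))
    {ε : ℝ} (hε0 : 0 < ε) (hε1 : ε < 1)
    (hn : 13 / ε ^ 2 ≤ (n : ℝ)) (hm : 1 ≤ m)
    {h : X → Bool} (hh : Measurable h) (htrue : ε ≤ trueDR D U h)
    (hf : AEMeasurable (sampK U n m) (Measure.pi fun _ : Fin n => D)) :
    ENNReal.ofReal (11 / 13) ≤
      sampleMeasure D U n m {s | ε / 2 ≤ empDR h s.1 s.2} := by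
  classical
  have hε2 : (0:ℝ) < ε ^ 2 := by positivity
  have hn13 : (13:ℝ) ≤ (n:ℝ) := by
    refine le_trans ?_ hn
    rw [le_div_iff₀ hε2]
    nlinarith
  have hnpos : (0:ℝ) < (n:ℝ) := by linarith
  have hn1 : 1 ≤ n := by exact_mod_cast (show (1:ℝ) ≤ (n:ℝ) by linarith)
  have hinvn : (n:ℝ) * ε^2 ≥ 13 := by
    rw [div_le_iff₀ hε2] at hn
    nlinarith
  obtain ⟨n', rfl⟩ : ∃ n', n = n' + 1 := ⟨n - 1, (Nat.succ_pred_eq_of_pos hn1).symm⟩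
  set π : Measure (Fin (n'+1) → X × Bool) := Measure.pi fun _ : Fin (n'+1) => D with hπ
  have hKprob : ∀ sc, IsProbabilityMeasure (sampK U (n'+1) m sc) := by
    intro sc
    haveI := Bsc_prob (n := n'+1) (m := m) hU sc
    unfold sampK
    exact Measure.isProbabilityMeasure_map measurable_prodMk_left.aemeasurable
  set K' := hf.mk (sampK U (n'+1) m) with hK'
  have hbind : π.bind (sampK U (n'+1) m) = π.bind K' := by
    unfold Measure.bind
    rw [Measure.map_congr hf.ae_eq_mk]
  have hνuniv : (π.bind (sampK U (n'+1) m)) Set.univ = 1 := by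
    rw [hbind, Measure.bind_apply MeasurableSet.univ hf.measurable_mk.aemeasurable]
    have hae : ∀ᵐ sc ∂π, K' sc Set.univ = 1 := by
      filter_upwards [hf.ae_eq_mk] with sc hsc
      rw [hK', ← hsc]
      exact (hKprob sc).measure_univ
    rw [lintegral_congr_ae hae]
    simp
  -- integrability of the true loss
  have hℓint : Integrable (ellF U h) D := by
    by_contra hni
    have h0 : trueDR D U h = 0 := integral_undef hni
    rw [h0] at htrue
    linarith
  -- a.e. measurability of the conditional mean
  have hphi_ae : ∀ i : Fin (n'+1),
      AEMeasurable (fun sc : Fin (n'+1) → X × Bool => phiF U m h (sc i)) π := by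
    intro i
    have hG : Measurable fun s : (Fin (n'+1) → X × Bool) × (Fin (n'+1) → Fin k → Fin m → X) =>
        ENNReal.ofReal (Mf h (s.1 i).2 (s.2 i)) :=
      ENNReal.measurable_ofReal.comp (meas_Mf_joint hh i)
    have h1 : AEMeasurable (fun sc => ∫⁻ s, ENNReal.ofReal (Mf h (s.1 i).2 (s.2 i))
        ∂sampK U (n'+1) m sc) π := (Measure.measurable_lintegral hG).comp_aemeasurable hf
    have h2 : ∀ sc : Fin (n'+1) → X × Bool,
        (∫⁻ s, ENNReal.ofReal (Mf h (s.1 i).2 (s.2 i)) ∂sampK U (n'+1) m sc)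
        = ENNReal.ofReal (phiF U m h (sc i)) := by
      intro sc
      haveI := Bsc_prob (n := n'+1) (m := m) hU sc
      haveI : ∀ i' : Fin (n'+1), IsProbabilityMeasure (gam U m (sc i').1) :=
        fun i' => gam_prob hU _
      unfold sampK
      rw [lintegral_map hG measurable_prodMk_left]
      have hint : Integrable (fun sp : Fin (n'+1) → Fin k → Fin m → X =>
          Mf h (sc i).2 (sp i)) (Bsc U m sc) :=
        integrable_of_bdd' ((meas_Mf hh _).comp (measurable_pi_apply i)).aestronglyMeasurable
          (C := 1) (fun sp => abs_le.2
            ⟨by linarith [Mf_nonneg (h := h) (sc i).2 (sp i)], Mf_le_one _ _⟩)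
      rw [← ofReal_integral_eq_lintegral_ofReal hint (ae_of_all _ fun sp => Mf_nonneg _ _)]
      congr 1
      exact pi_integral_eval (fun i' : Fin (n'+1) => gam U m (sc i').1)
        (meas_Mf hh _).aestronglyMeasurable
    have h3 : AEMeasurable (fun sc : Fin (n'+1) → X × Bool =>
        ENNReal.ofReal (phiF U m h (sc i))) π := by
      rwa [funext h2] at h1
    have h4 : AEMeasurable (fun sc : Fin (n'+1) → X × Bool =>
        (ENNReal.ofReal (phiF U m h (sc i))).toReal) π :=
      ENNReal.measurable_toReal.comp_aemeasurable h3
    have h5 : (fun sc : Fin (n'+1) → X × Bool => (ENNReal.ofReal (phiF U m h (sc i))).toReal)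
        = fun sc => phiF U m h (sc i) :=
      funext fun sc => ENNReal.toReal_ofReal (phiF_nonneg _)
    rwa [h5] at h4
  -- extract a measurable representative of the conditional mean
  obtain ⟨G, hGmeas, hG0, hG1, hGae⟩ := extract_coord D (phiF U m h)
    phiF_nonneg (phiF_le_one hU hh) (0 : Fin (n'+1)) (hphi_ae 0)
  set b : ℝ := ∫ p, G p ∂D with hb
  have hGint : Integrable G D := integrable_of_bdd' hGmeas.aestronglyMeasurable (C := 1)
    (fun p => abs_le.2 ⟨by linarith [hG0 p], hG1 p⟩)
  have hφint : Integrable (phiF U m h) D := hGint.congr hGae.symm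
  have hbφ : ∫ p, phiF U m h p ∂D = b := integral_congr_ae hGae
  have hεb : ε ≤ b := by
    have h2 : ∫ p, ellF U h p ∂D ≤ ∫ p, phiF U m h p ∂D :=
      integral_mono hℓint hφint (ell_le_phi hU hh hm)
    have h1 : trueDR D U h = ∫ p, ellF U h p ∂D := rfl
    rw [h1] at htrue
    linarith [hbφ]
  have hb1 : b ≤ 1 := by
    have hle : ∫ p, G p ∂D ≤ ∫ _p, (1:ℝ) ∂D := integral_mono hGint (integrable_const 1) hG1
    simpa using hle
  have hb0 : 0 ≤ b := integral_nonneg hG0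
  have hcomp : ∀ i : Fin (n'+1), (fun sc : Fin (n'+1) → X × Bool => phiF U m h (sc i))
      =ᵐ[π] (fun sc => G (sc i)) := by
    intro i
    have hmapD : π.map (Function.eval i) = D := pi_map_eval (fun _ : Fin (n'+1) => D) i
    have htrans : phiF U m h =ᵐ[π.map (Function.eval i)] G := hmapD ▸ hGae
    exact ae_eq_comp (measurable_pi_apply i).aemeasurable htrans
  have hall : ∀ᵐ sc ∂π, ∀ i, phiF U m h (sc i) = G (sc i) :=
    ae_all_iff.2 fun i => hcomp i
  -- the bad event
  set bad : Set ((Fin (n'+1) → X × Bool) × (Fin (n'+1) → Fin k → Fin m → X)) :=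
    {s | empDR h s.1 s.2 < ε/2} with hbadset
  have hbadm : MeasurableSet bad := measurableSet_lt (meas_empDR hh) measurable_const
  -- conditional Chebyshev bound
  have hcond : ∀ sc : Fin (n'+1) → X × Bool, (∀ i, phiF U m h (sc i) = G (sc i)) →
      sampK U (n'+1) m sc bad ≤ ENNReal.ofReal
        ((1/(4*((n'+1:ℕ):ℝ)) + ((1/((n'+1:ℕ):ℝ)) * ∑ i, G (sc i) - b)^2) / ((ε/2)^2)) := by
    intro sc hsc
    haveI := Bsc_prob (n := n'+1) (m := m) hU sc
    haveI : ∀ i : Fin (n'+1), IsProbabilityMeasure (gam U m (sc i).1) :=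
      fun i => gam_prob hU _
    unfold sampK
    rw [Measure.map_apply measurable_prodMk_left hbadm]
    have hempmeas : Measurable fun w : Fin (n'+1) → Fin k → Fin m → X => empDR h sc w :=
      meas_empDR_right hh sc
    have hsub : (fun sp => (sc, sp)) ⁻¹' bad ⊆ {w | (ε/2)^2 ≤ (empDR h sc w - b)^2} := by
      intro w hw
      have hw' : empDR h sc w < ε/2 := hw
      have h1 : ε/2 ≤ b - empDR h sc w := by linarith
      have h2 := pow_le_pow_left₀ (by linarith : (0:ℝ) ≤ ε/2) h1 2
      have h3 : (b - empDR h sc w)^2 = (empDR h sc w - b)^2 := by ring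
      show (ε/2)^2 ≤ (empDR h sc w - b)^2
      linarith
    refine le_trans (measure_mono hsub) ?_
    have hqint : Integrable (fun w => (empDR h sc w - b)^2) (Bsc U m sc) := by
      refine integrable_of_bdd'
        ((hempmeas.sub measurable_const).pow_const 2).aestronglyMeasurable (C := 4) fun w => ?_
      rw [abs_le]
      constructor
      · nlinarith [sq_nonneg (empDR h sc w - b)]
      · nlinarith [empDR_nonneg (h := h) sc w, empDR_le_one (h := h) sc w, hb0, hb1]
    have hmark := meas_sq_ge (Bsc U m sc) (q := fun w => empDR h sc w - b)
      (hempmeas.sub measurable_const).aemeasurable hqint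
      (c := (ε/2)^2) (by positivity)
    refine le_trans hmark (ENNReal.ofReal_le_ofReal ?_)
    have hc : (0:ℝ) < (ε/2)^2 := by positivity
    refine (div_le_div_iff_of_pos_right hc).mpr ?_
    have havg := avgVar (N := n'+1) (by omega) (fun i => gam U m (sc i).1)
      (fun i => Mf h (sc i).2) (fun i => meas_Mf hh _)
      (fun i v => Mf_nonneg _ _) (fun i v => Mf_le_one _ _) b
    have hsum_eq : ∑ i, ∫ v, Mf h (sc i).2 v ∂gam U m (sc i).1 = ∑ i, G (sc i) :=
      Finset.sum_congr rfl fun i _ => by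
        rw [show ∫ v, Mf h (sc i).2 v ∂gam U m (sc i).1 = phiF U m h (sc i) from rfl, hsc i]
    calc ∫ w, (empDR h sc w - b)^2 ∂Bsc U m sc
        = ∫ x, ((1/((n'+1 : ℕ):ℝ)) * ∑ i, Mf h (sc i).2 (x i) - b)^2
            ∂Measure.pi (fun i : Fin (n'+1) => gam U m (sc i).1) := by
          unfold Bsc
          exact integral_congr_ae (ae_of_all _ fun w =>
            show (empDR h sc w - b)^2
              = ((1/((n'+1:ℕ):ℝ)) * ∑ i, Mf h (sc i).2 (w i) - b)^2 by rw [empDR_eq])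
    _ ≤ 1/(4*((n'+1:ℕ):ℝ)) + ((1/((n'+1:ℕ):ℝ))
          * (∑ i, ∫ v, Mf h (sc i).2 v ∂gam U m (sc i).1) - b)^2 := havg
    _ = 1/(4*((n'+1:ℕ):ℝ)) + ((1/((n'+1:ℕ):ℝ)) * ∑ i, G (sc i) - b)^2 := by rw [hsum_eq]
  -- average over the clean sample
  set Ψ : (Fin (n'+1) → X × Bool) → ℝ :=
    fun sc => (1/((n'+1:ℕ):ℝ)) * ∑ i, G (sc i) with hΨ
  have hΨmeas : Measurable Ψ := by
    apply Measurable.const_mul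
    exact Finset.measurable_sum _ fun i _ => hGmeas.comp (measurable_pi_apply i)
  have hNpos : (0:ℝ) < ((n'+1:ℕ):ℝ) := by positivity
  have hΨ0 : ∀ sc, 0 ≤ Ψ sc := fun sc =>
    mul_nonneg (by positivity) (Finset.sum_nonneg fun i _ => hG0 _)
  have hΨ1 : ∀ sc, Ψ sc ≤ 1 := by
    intro sc
    have hsum : ∑ i, G (sc i) ≤ ((n'+1:ℕ):ℝ) := by
      calc ∑ i, G (sc i) ≤ ∑ _i : Fin (n'+1), (1:ℝ) := Finset.sum_le_sum fun i _ => hG1 _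
      _ = ((n'+1:ℕ):ℝ) := by simp
    calc Ψ sc ≤ (1/((n'+1:ℕ):ℝ)) * ((n'+1:ℕ):ℝ) :=
      mul_le_mul_of_nonneg_left hsum (by positivity)
    _ = 1 := by field_simp
  have hsq_int : Integrable (fun sc => (Ψ sc - b)^2) π := by
    refine integrable_of_bdd'
      ((hΨmeas.sub measurable_const).pow_const 2).aestronglyMeasurable (C := 4) fun sc => ?_
    rw [abs_le]
    constructor
    · nlinarith [sq_nonneg (Ψ sc - b)]
    · nlinarith [hΨ0 sc, hΨ1 sc, hb0, hb1]
  have hint2 : Integrable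
      (fun sc => (1/(4*((n'+1:ℕ):ℝ)) + (Ψ sc - b)^2)/((ε/2)^2)) π := by
    apply Integrable.div_const
    exact (integrable_const _).add hsq_int
  have hvar : ∫ sc, (Ψ sc - b)^2 ∂π ≤ 1/(4*((n'+1:ℕ):ℝ)) := by
    have havg2 := avgVar (N := n'+1) (by omega) (fun _ : Fin (n'+1) => D)
      (fun _ => G) (fun _ => hGmeas) (fun _ p => hG0 p) (fun _ p => hG1 p) b
    have hsum : ∑ _i : Fin (n'+1), ∫ p, G p ∂D = ((n'+1:ℕ):ℝ) * b := by
      rw [Finset.sum_const]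
      simp [hb, nsmul_eq_mul]
    rw [hsum] at havg2
    have hzero : ((1/((n'+1:ℕ):ℝ)) * (((n'+1:ℕ):ℝ) * b) - b)^2 = 0 := by
      have : (1/((n'+1:ℕ):ℝ)) * (((n'+1:ℕ):ℝ) * b) = b := by field_simp
      rw [this]
      simp
    rw [hzero, add_zero] at havg2
    exact havg2
  have hbadb : (π.bind (sampK U (n'+1) m)) bad ≤ ENNReal.ofReal (2/13) := by
    rw [hbind, Measure.bind_apply hbadm hf.measurable_mk.aemeasurable]
    have hptw : ∀ᵐ sc ∂π, K' sc bad ≤ ENNReal.ofReal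
        ((1/(4*((n'+1:ℕ):ℝ)) + (Ψ sc - b)^2)/((ε/2)^2)) := by
      filter_upwards [hf.ae_eq_mk, hall] with sc h1 h2
      rw [hK', ← h1]
      exact hcond sc h2
    calc ∫⁻ sc, K' sc bad ∂π
        ≤ ∫⁻ sc, ENNReal.ofReal
            ((1/(4*((n'+1:ℕ):ℝ)) + (Ψ sc - b)^2)/((ε/2)^2)) ∂π := lintegral_mono_ae hptw
    _ = ENNReal.ofReal (∫ sc, (1/(4*((n'+1:ℕ):ℝ)) + (Ψ sc - b)^2)/((ε/2)^2) ∂π) :=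
          (ofReal_integral_eq_lintegral_ofReal hint2 (ae_of_all _ fun sc => by positivity)).symm
    _ ≤ ENNReal.ofReal (2/13) := by
          apply ENNReal.ofReal_le_ofReal
          rw [integral_div, integral_add (integrable_const _) hsq_int, integral_const]
          simp only [measure_univ, probReal_univ, ENNReal.toReal_one, smul_eq_mul, one_mul]
          have hnum : 1/(4*((n'+1:ℕ):ℝ)) + ∫ sc, (Ψ sc - b)^2 ∂π
              ≤ 1/(2*((n'+1:ℕ):ℝ)) := by
            have : 1/(4*((n'+1:ℕ):ℝ)) + 1/(4*((n'+1:ℕ):ℝ)) = 1/(2*((n'+1:ℕ):ℝ)) := by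
              field_simp
              ring
            linarith [hvar]
          have hNε : ((n'+1:ℕ):ℝ) * ε^2 ≥ 13 := hinvn
          have hc : (0:ℝ) < (ε/2)^2 := by positivity
          calc (1/(4*((n'+1:ℕ):ℝ)) + ∫ sc, (Ψ sc - b)^2 ∂π)/((ε/2)^2)
              ≤ (1/(2*((n'+1:ℕ):ℝ)))/((ε/2)^2) := (div_le_div_iff_of_pos_right hc).mpr hnum
          _ = 2/(((n'+1:ℕ):ℝ)*ε^2) := by
                field_simp
          _ ≤ 2/13 := div_le_div_of_nonneg_left (by norm_num) (by norm_num) hNε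
  -- conclude
  have hgood : {s : (Fin (n'+1) → X × Bool) × (Fin (n'+1) → Fin k → Fin m → X) |
      ε/2 ≤ empDR h s.1 s.2} = badᶜ := by
    ext s
    simp [hbadset, not_lt]
  have hfin : sampleMeasure D U (n'+1) m {s | ε / 2 ≤ empDR h s.1 s.2}
      = 1 - (π.bind (sampK U (n'+1) m)) bad := by
    haveI : IsProbabilityMeasure (π.bind (sampK U (n'+1) m)) := ⟨hνuniv⟩
    rw [sampleMeasure_eq, hgood]
    exact prob_compl_eq_one_sub hbadm
  rw [hfin]
  calc ENNReal.ofReal (11/13) = 1 - ENNReal.ofReal (2/13) := by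
        rw [← ENNReal.ofReal_one, ← ENNReal.ofReal_sub _ (by norm_num : (0:ℝ) ≤ 2/13)]
        norm_num
  _ ≤ 1 - (π.bind (sampK U (n'+1) m)) bad := tsub_le_tsub_left hbadb 1

end Core


/-- **Lemma (double sampling, realizable case).** Let `S` and `S'` be two independent
samples, each consisting of `n ≥ 13/ε²` i.i.d. clean examples from `D` together with
`m ≥ (32/ε²)·log(200/ε)` i.i.d. perturbations from each of the ≤ `k` perturbation
distributions of each clean example.  Let `A` be the event that some `h ∈ H` has
`DR_S(h) = 0` but `DR_D(h) ≥ ε`, and `B` the event that some `h ∈ H` has `DR_S(h) = 0` but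
`DR_{S'}(h) ≥ ε/2`.  Then `P(B) ≥ (2/5)·P(A)`. -/
theorem double_sampling_realizable
    {X : Type*} [MeasurableSpace X] {k n m : ℕ}
    (H : Set (X → Bool)) (hH : ∀ h ∈ H, Measurable h)
    (D : Measure (X × Bool)) [IsProbabilityMeasure D]
    (U : X → Fin k → Measure X) (hU : ∀ x j, IsProbabilityMeasure (U x j))
    (ε : ℝ) (hε0 : 0 < ε) (hε1 : ε < 1)
    (hn : 13 / ε ^ 2 ≤ (n : ℝ))
    (hm : 32 / ε ^ 2 * Real.log (200 / ε) ≤ (m : ℝ)) :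
    2 / 5 * ((sampleMeasure D U n m).prod (sampleMeasure D U n m))
        {p | ∃ h ∈ H, empDR h p.1.1 p.1.2 = 0 ∧ ε ≤ trueDR D U h} ≤
      ((sampleMeasure D U n m).prod (sampleMeasure D U n m))
        {p | ∃ h ∈ H, empDR h p.1.1 p.1.2 = 0 ∧ ε / 2 ≤ empDR h p.2.1 p.2.2} := by
  classical
  by_cases hf : AEMeasurable (sampK U n m) (Measure.pi fun _ : Fin n => D)
  case neg =>
    have hz : sampleMeasure D U n m = 0 := by
      rw [sampleMeasure_eq]
      unfold Measure.bind
      rw [Measure.map_of_not_aemeasurable hf]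
      simp
    rw [hz]
    simp
  case pos =>
  have hε2 : (0:ℝ) < ε ^ 2 := by positivity
  have hm1 : 1 ≤ m := by
    have hlog : 0 < Real.log (200/ε) := Real.log_pos (by rw [lt_div_iff₀ hε0]; nlinarith)
    have hpos : (0:ℝ) < 32/ε^2 * Real.log (200/ε) := by positivity
    rcases Nat.eq_zero_or_pos m with h0 | h; swap
    · exact h
    exfalso
    subst h0
    simp only [Nat.cast_zero] at hm
    linarith
  haveI hνP : IsProbabilityMeasure (sampleMeasure D U n m) := by
    constructor
    rw [sampleMeasure_eq]
    have hbind : (Measure.pi fun _ : Fin n => D).bind (sampK U n m)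
        = (Measure.pi fun _ : Fin n => D).bind (hf.mk _) := by
      unfold Measure.bind
      rw [Measure.map_congr hf.ae_eq_mk]
    rw [hbind, Measure.bind_apply MeasurableSet.univ hf.measurable_mk.aemeasurable]
    have hKprob : ∀ sc, IsProbabilityMeasure (sampK U n m sc) := fun sc => by
      haveI := Bsc_prob (n := n) (m := m) hU sc
      unfold sampK
      exact Measure.isProbabilityMeasure_map measurable_prodMk_left.aemeasurable
    have hae : ∀ᵐ sc ∂(Measure.pi fun _ : Fin n => D), hf.mk _ sc Set.univ = 1 := by
      filter_upwards [hf.ae_eq_mk] with sc hsc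
      rw [← hsc]
      exact (hKprob sc).measure_univ
    rw [lintegral_congr_ae hae]
    simp
  set ν := sampleMeasure D U n m with hν
  set A1 : Set ((Fin n → X × Bool) × (Fin n → Fin k → Fin m → X)) :=
    {s | ∃ h ∈ H, empDR h s.1 s.2 = 0 ∧ ε ≤ trueDR D U h} with hA1
  -- bound on the left-hand side
  have hL : (ν.prod ν) {p | ∃ h ∈ H, empDR h p.1.1 p.1.2 = 0 ∧ ε ≤ trueDR D U h}
      ≤ ν A1 := by
    have hsub : {p : ((Fin n → X × Bool) × (Fin n → Fin k → Fin m → X)) ×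
        ((Fin n → X × Bool) × (Fin n → Fin k → Fin m → X)) |
          ∃ h ∈ H, empDR h p.1.1 p.1.2 = 0 ∧ ε ≤ trueDR D U h}
        ⊆ Prod.fst ⁻¹' (toMeasurable ν A1) := by
      intro p hp
      exact subset_toMeasurable ν A1 hp
    refine le_trans (measure_mono hsub) ?_
    rw [show Prod.fst ⁻¹' (toMeasurable ν A1)
        = (toMeasurable ν A1) ×ˢ (Set.univ : Set ((Fin n → X × Bool) ×
            (Fin n → Fin k → Fin m → X))) from (Set.prod_univ).symm,
      Measure.prod_prod, measure_univ, mul_one, measure_toMeasurable]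
  set Bset : Set (((Fin n → X × Bool) × (Fin n → Fin k → Fin m → X)) ×
      ((Fin n → X × Bool) × (Fin n → Fin k → Fin m → X))) :=
    {p | ∃ h ∈ H, empDR h p.1.1 p.1.2 = 0 ∧ ε / 2 ≤ empDR h p.2.1 p.2.2} with hB
  set T := toMeasurable (ν.prod ν) Bset with hT
  have hTm : MeasurableSet T := measurableSet_toMeasurable _ _
  have hkey : ∀ s1 ∈ A1, ENNReal.ofReal (11/13) ≤ ν (Prod.mk s1 ⁻¹' T) := by
    intro s1 hs1
    obtain ⟨h, hhH, hemp0, htrue⟩ := hs1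
    have hcore := core_bound D U hU hε0 hε1 hn hm1 (hH h hhH) htrue hf
    refine le_trans hcore (measure_mono ?_)
    intro s2 hs2
    have hmem : (s1, s2) ∈ Bset := ⟨h, hhH, hemp0, hs2⟩
    exact subset_toMeasurable _ _ hmem
  set A2 : Set ((Fin n → X × Bool) × (Fin n → Fin k → Fin m → X)) :=
    {s1 | ENNReal.ofReal (11/13) ≤ ν (Prod.mk s1 ⁻¹' T)} with hA2
  have hA2m : MeasurableSet A2 :=
    measurableSet_le measurable_const (measurable_measure_prodMk_left hTm)
  have hchain : ENNReal.ofReal (11/13) * ν A1 ≤ (ν.prod ν) Bset := by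
    have h1 : (ν.prod ν) Bset = (ν.prod ν) T := (measure_toMeasurable _).symm
    rw [h1, Measure.prod_apply hTm]
    calc ENNReal.ofReal (11/13) * ν A1 ≤ ENNReal.ofReal (11/13) * ν A2 :=
          mul_le_mul_right (measure_mono fun s1 hs1 => hkey s1 hs1) _
    _ = ∫⁻ s1, A2.indicator (fun _ => ENNReal.ofReal (11/13)) s1 ∂ν :=
          (lintegral_indicator_const hA2m _).symm
    _ ≤ ∫⁻ s1, ν (Prod.mk s1 ⁻¹' T) ∂ν := by
          apply lintegral_mono
          intro s1
          by_cases hs : s1 ∈ A2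
          · rw [Set.indicator_of_mem hs]; exact hs
          · rw [Set.indicator_of_notMem hs]; exact zero_le
  calc 2/5 * (ν.prod ν) {p | ∃ h ∈ H, empDR h p.1.1 p.1.2 = 0 ∧ ε ≤ trueDR D U h}
      ≤ 2/5 * ν A1 := mul_le_mul_right hL _
  _ ≤ ENNReal.ofReal (11/13) * ν A1 := by
        apply mul_le_mul_left
        have h25 : (2:ℝ≥0∞)/5 = ENNReal.ofReal (2/5) := by
          rw [ENNReal.ofReal_div_of_pos (by norm_num)]
          norm_num
        rw [h25]
        exact ENNReal.ofReal_le_ofReal (by norm_num)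
  _ ≤ (ν.prod ν) Bset := hchain
end

section
/- Suppose each 𝒰(x) admits a representative set ℛ(x) ⊆ 𝒰(x) with |ℛ(x)| ≤ k such that every u ∈ 𝒰(x) is within total variation distance ε' of some r ∈ ℛ(x). Let S = S_c ∪ S_p and S' = S'_c ∪ S'_p be two independent samples, each with n ≥ 13/ε² clean examples drawn i.i.d. from 𝒟 and m ≥ (32/ε²)·log(200/ε) perturbations drawn i.i.d. from each r ∈ ℛ(x) for each clean example (x,y). Let A be the event that there exists h ∈ ℋ with DR_S(h) = 0 but DR_𝒟(h) ≥ ε + ε', and let B be the event that there exists h ∈ ℋ with DR_S(h) = 0 but DR_{S'}(h) ≥ ε/2. Then P(B) ≥ (2/5)·P(A). -/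
open MeasureTheory

/-- Distributional adversarial loss `DR_D(h)` for a (possibly infinite) family `U x` of
perturbation distributions: `DR_D(h) = E_{(x,y)∼D}[ sup_{u ∈ U(x)} E_{z∼u} 1[h(z) ≠ y] ]`. -/
noncomputable def trueDRSet {X : Type*} [MeasurableSpace X]
    (D : Measure (X × Bool)) (U : X → Set (Measure X)) (h : X → Bool) : ℝ :=
  ∫ xy, ⨆ u ∈ U xy.1, (u {z | h z ≠ xy.2}).toReal ∂D

namespace DSHelp

variable {ι : Type*} [Fintype ι] [DecidableEq ι] {α : ι → Type*} [∀ i, MeasurableSpace (α i)]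

lemma pi_map_eval (μ : ∀ i, Measure (α i)) [∀ i, IsProbabilityMeasure (μ i)] (i : ι) :
    (Measure.pi μ).map (Function.eval i) = μ i := by
  ext s hs
  rw [Measure.map_apply (measurable_pi_apply i) hs]
  have hpre : Function.eval i ⁻¹' s =
      Set.pi Set.univ (Function.update (fun j => (Set.univ : Set (α j))) i s) := by
    ext x
    constructor
    · intro hx j _
      by_cases hj : j = i
      · subst hj; simpa [Function.update] using hx
      · simp [Function.update, hj]
    · intro hx
      have := hx i (Set.mem_univ i)
      simpa [Function.update] using this
  rw [hpre, Measure.pi_pi]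
  rw [Finset.prod_eq_single i]
  · simp [Function.update]
  · intro j _ hj
    simp [Function.update, hj]
  · intro hi; exact absurd (Finset.mem_univ i) hi

lemma pi_map_pair (μ : ∀ i, Measure (α i)) [∀ i, IsProbabilityMeasure (μ i)]
    {i j : ι} (hij : i ≠ j) :
    (Measure.pi μ).map (fun x => (x i, x j)) = (μ i).prod (μ j) := by
  refine (Measure.prod_eq fun s t hs ht => ?_).symm
  rw [Measure.map_apply ((measurable_pi_apply i).prodMk (measurable_pi_apply j)) (hs.prod ht)]
  set F : ∀ l, Set (α l) :=
    Function.update (Function.update (fun l => (Set.univ : Set (α l))) i s) j t with hF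
  have hFi : F i = s := by rw [hF, Function.update_of_ne hij, Function.update_self]
  have hFj : F j = t := by rw [hF, Function.update_self]
  have hpre : (fun x => (x i, x j)) ⁻¹' (s ×ˢ t) = Set.pi Set.univ F := by
    ext x
    simp only [Set.mem_preimage, Set.mem_prod, Set.mem_pi, Set.mem_univ, forall_true_left]
    constructor
    · rintro ⟨hxs, hxt⟩ l
      by_cases hl : l = j
      · subst hl; rw [hFj]; exact hxt
      · by_cases hl' : l = i
        · subst hl'; rw [hFi]; exact hxs
        · simp [hF, Function.update, hl, hl']
    · intro hx
      exact ⟨by have := hx i; rwa [hFi] at this, by have := hx j; rwa [hFj] at this⟩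
  rw [hpre, Measure.pi_pi]
  have hjmem : j ∈ Finset.univ.erase i := Finset.mem_erase.2 ⟨(Ne.symm hij), Finset.mem_univ j⟩
  rw [← Finset.mul_prod_erase Finset.univ _ (Finset.mem_univ i),
    ← Finset.mul_prod_erase _ _ hjmem, hFi, hFj]
  have hrest : ∀ l ∈ (Finset.univ.erase i).erase j, μ l (F l) = 1 := by
    intro l hl
    rcases Finset.mem_erase.1 hl with ⟨hlj, hl2⟩
    rcases Finset.mem_erase.1 hl2 with ⟨hli, -⟩
    simp [hF, Function.update, hli, hlj]
  rw [Finset.prod_congr rfl hrest]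
  simp [mul_comm, mul_assoc, mul_left_comm]

end DSHelp

namespace Part2

open ENNReal

variable {X : Type*} [MeasurableSpace X] {k m : ℕ}

noncomputable def indE (h : X → Bool) (y : Bool) (z : X) : ℝ≥0∞ := if h z ≠ y then 1 else 0

lemma measurable_indE {h : X → Bool} (hh : Measurable h) (y : Bool) :
    Measurable (indE h y) := by
  unfold indE
  exact Measurable.ite (hh (measurableSet_singleton y)).compl measurable_const measurable_const

lemma indE_le_one (h : X → Bool) (y : Bool) (z : X) : indE h y z ≤ 1 := by
  unfold indE; split <;> simp

noncomputable def ZE (h : X → Bool) (y : Bool) (w : Fin k → Fin m → X) : ℝ≥0∞ :=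
  ⨆ j : Fin k, (m : ℝ≥0∞)⁻¹ * ∑ l : Fin m, indE h y (w j l)

lemma measurable_ZE {h : X → Bool} (hh : Measurable h) (y : Bool) :
    Measurable (ZE h y (k := k) (m := m)) := by
  apply Measurable.iSup
  intro j
  apply Measurable.const_mul
  apply Finset.measurable_sum
  intro l _
  exact (measurable_indE hh y).comp ((measurable_pi_apply l).comp (measurable_pi_apply j))

lemma term_le_one (h : X → Bool) (y : Bool) (w : Fin k → Fin m → X) (j : Fin k) :
    (m : ℝ≥0∞)⁻¹ * ∑ l : Fin m, indE h y (w j l) ≤ 1 := by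
  rcases Nat.eq_zero_or_pos m with hm | hm
  · subst hm; simp
  · have hsum : ∑ l : Fin m, indE h y (w j l) ≤ (m : ℝ≥0∞) := by
      calc ∑ l : Fin m, indE h y (w j l) ≤ ∑ _l : Fin m, (1 : ℝ≥0∞) :=
            Finset.sum_le_sum fun l _ => indE_le_one h y _
        _ = (m : ℝ≥0∞) := by simp
    calc (m : ℝ≥0∞)⁻¹ * ∑ l : Fin m, indE h y (w j l) ≤ (m : ℝ≥0∞)⁻¹ * (m : ℝ≥0∞) :=
          mul_le_mul_right hsum _
      _ = 1 := ENNReal.inv_mul_cancel (by exact_mod_cast hm.ne') (by simp)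

lemma ZE_le_one (h : X → Bool) (y : Bool) (w : Fin k → Fin m → X) : ZE h y w ≤ 1 :=
  iSup_le fun j => term_le_one h y w j

lemma toReal_iSup_fin {k : ℕ} (v : Fin k → ℝ≥0∞) (hv : ∀ j, v j ≤ 1) :
    (⨆ j, v j).toReal = ⨆ j, (v j).toReal := by
  rcases Nat.eq_zero_or_pos k with hk | hk
  · subst hk
    rw [iSup_of_empty]
    have : ⨆ j : Fin 0, (v j).toReal = sSup ∅ := by
      rw [iSup, Set.range_eq_empty]
    rw [this, Real.sSup_empty]
    simp
  · have : Nonempty (Fin k) := ⟨⟨0, hk⟩⟩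
    obtain ⟨j₀, hj₀⟩ := Finite.exists_max v
    have h1 : (⨆ j, v j) = v j₀ := le_antisymm (iSup_le hj₀) (le_iSup v j₀)
    have h2 : (⨆ j, (v j).toReal) = (v j₀).toReal := by
      refine le_antisymm (ciSup_le fun j => ?_) (le_ciSup (f := fun j => (v j).toReal)
        (Set.Finite.bddAbove (Set.finite_range _)) j₀)
      exact ENNReal.toReal_mono (ne_top_of_le_ne_top one_ne_top (hv j₀)) (hj₀ j)
    rw [h1, h2]

lemma ZE_toReal (h : X → Bool) (y : Bool) (w : Fin k → Fin m → X) :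
    (ZE h y w).toReal =
      ⨆ j : Fin k, (1 / (m : ℝ)) * ∑ l : Fin m, (if h (w j l) ≠ y then (1 : ℝ) else 0) := by
  rw [ZE, toReal_iSup_fin _ (term_le_one h y w)]
  congr 1
  funext j
  rw [ENNReal.toReal_mul, ENNReal.toReal_inv,
    ENNReal.toReal_sum (fun l _ => ne_top_of_le_ne_top one_ne_top (indE_le_one h y _))]
  simp [indE, apply_ite ENNReal.toReal, one_div]

end Part2

namespace Part3

open ENNReal Part2

set_option linter.unusedSectionVars false

variable {X : Type*} [MeasurableSpace X] {k m : ℕ}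

noncomputable def KM (R : X → Fin k → Measure X) (m : ℕ) (x : X) :
    Measure (Fin k → Fin m → X) :=
  Measure.pi fun j => Measure.pi fun _ : Fin m => R x j

noncomputable def gY (h : X → Bool) (R : X → Fin k → Measure X) (m : ℕ) (xy : X × Bool) :
    ℝ≥0∞ :=
  ∫⁻ w, ZE h xy.2 w ∂(KM R m xy.1)

variable {R : X → Fin k → Measure X}

lemma KM_prob (hprob : ∀ x j, IsProbabilityMeasure (R x j)) (x : X) : IsProbabilityMeasure (KM R m x) := by
  haveI : ∀ j, IsProbabilityMeasure (R x j) := fun j => hprob x j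
  unfold KM
  infer_instance

lemma gY_le_one (hprob : ∀ x j, IsProbabilityMeasure (R x j)) (h : X → Bool) (xy : X × Bool) : gY h R m xy ≤ 1 := by
  haveI := KM_prob (R := R) (m := m) hprob xy.1
  calc gY h R m xy ≤ ∫⁻ _, 1 ∂(KM R m xy.1) := lintegral_mono fun w => ZE_le_one h xy.2 w
    _ = 1 := by simp

lemma gY_ge (hprob : ∀ x j, IsProbabilityMeasure (R x j)) (hm : 1 ≤ m) {h : X → Bool} (hh : Measurable h) (x : X) (y : Bool) (j : Fin k) :
    (R x j) {z | h z ≠ y} ≤ gY h R m (x, y) := by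
  haveI : ∀ x j, IsProbabilityMeasure (R x j) := hprob
  have hEmeas : MeasurableSet {z | h z ≠ y} := (hh (measurableSet_singleton y)).compl
  have step1 : ∫⁻ w, (m : ℝ≥0∞)⁻¹ * ∑ l : Fin m, indE h y (w j l) ∂(KM R m x) ≤
      gY h R m (x, y) := by
    apply lintegral_mono
    intro w
    exact le_iSup (fun j' => (m : ℝ≥0∞)⁻¹ * ∑ l : Fin m, indE h y (w j' l)) j
  have hindmeas : ∀ l : Fin m, Measurable fun w : Fin k → Fin m → X => indE h y (w j l) :=
    fun l => (measurable_indE hh y).comp ((measurable_pi_apply l).comp (measurable_pi_apply j))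
  have step2 : ∫⁻ w, (m : ℝ≥0∞)⁻¹ * ∑ l : Fin m, indE h y (w j l) ∂(KM R m x) =
      (m : ℝ≥0∞)⁻¹ * ∑ l : Fin m, ∫⁻ w, indE h y (w j l) ∂(KM R m x) := by
    rw [lintegral_const_mul _ (Finset.measurable_sum _ fun l _ => hindmeas l)]
    congr 1
    exact lintegral_finset_sum _ fun l _ => hindmeas l
  have coord : ∀ l : Fin m, ∫⁻ w, indE h y (w j l) ∂(KM R m x) = (R x j) {z | h z ≠ y} := by
    intro l
    have hf1 : Measurable fun v : Fin m → X => indE h y (v l) :=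
      (measurable_indE hh y).comp (measurable_pi_apply l)
    have h1 : ∫⁻ w, indE h y (w j l) ∂(KM R m x) =
        ∫⁻ v, indE h y (v l) ∂(Measure.pi fun _ : Fin m => R x j) := by
      conv_rhs => rw [← DSHelp.pi_map_eval (fun j' => Measure.pi fun _ : Fin m => R x j') j]
      rw [lintegral_map hf1 (measurable_pi_apply j)]
      rfl
    have h2 : ∫⁻ v, indE h y (v l) ∂(Measure.pi fun _ : Fin m => R x j) =
        ∫⁻ z, indE h y z ∂(R x j) := by
      conv_rhs => rw [← DSHelp.pi_map_eval (fun _ : Fin m => R x j) l]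
      rw [lintegral_map (measurable_indE hh y) (measurable_pi_apply l)]
    have h3 : ∫⁻ z, indE h y z ∂(R x j) = (R x j) {z | h z ≠ y} := by
      have : indE h y = Set.indicator {z | h z ≠ y} (fun _ => (1 : ℝ≥0∞)) := by
        funext z
        simp only [indE, Set.indicator_apply, Set.mem_setOf_eq]
      rw [this, lintegral_indicator_const hEmeas]
      simp
    rw [h1, h2, h3]
  have step3 : (m : ℝ≥0∞)⁻¹ * ∑ l : Fin m, ∫⁻ w, indE h y (w j l) ∂(KM R m x) =
      (R x j) {z | h z ≠ y} := by
    rw [Finset.sum_congr rfl fun l _ => coord l, Finset.sum_const, Finset.card_univ,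
      Fintype.card_fin, nsmul_eq_mul, ← mul_assoc,
      ENNReal.inv_mul_cancel (by exact_mod_cast (Nat.one_le_iff_ne_zero.1 hm)) (by simp),
      one_mul]
  calc (R x j) {z | h z ≠ y} = _ := step3.symm
    _ ≤ gY h R m (x, y) := step2 ▸ step1

end Part3

namespace Part4

open ENNReal Part2 Part3

set_option linter.unusedSectionVars false

lemma exists_meas_rep {α : Type*} [MeasurableSpace α] {n : ℕ} (Dm : Measure α)
    [IsProbabilityMeasure Dm] (g : α → ℝ≥0∞)
    (hg : AEMeasurable (fun sc : Fin (n + 1) → α => g (sc 0)) (Measure.pi fun _ => Dm)) :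
    ∃ g' : α → ℝ≥0∞, Measurable g' ∧ g =ᵐ[Dm] g' := by
  set Pn : Measure (Fin n → α) := Measure.pi fun _ => Dm with hPn
  haveI : IsProbabilityMeasure Pn := by rw [hPn]; infer_instance
  set e := MeasurableEquiv.piFinSuccAbove (fun _ : Fin (n + 1) => α) 0 with he
  have hmp : MeasurePreserving e (Measure.pi fun _ : Fin (n + 1) => Dm) (Dm.prod Pn) :=
    measurePreserving_piFinSuccAbove (fun _ : Fin (n + 1) => Dm) 0
  have h1 : AEMeasurable (fun p : α × (Fin n → α) => g p.1) (Dm.prod Pn) := by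
    rw [← hmp.map_eq, e.measurableEmbedding.aemeasurable_map_iff]
    have : ((fun p : α × (Fin n → α) => g p.1) ∘ e) = fun sc => g (sc 0) := by
      funext sc
      simp [he, MeasurableEquiv.piFinSuccAbove]
    rw [this]
    exact hg
  have h2 : AEMeasurable (fun p : (Fin n → α) × α => g p.2) (Pn.prod Dm) := by
    have := h1.comp_quasiMeasurePreserving
      (Measure.measurePreserving_swap (μ := Pn) (ν := Dm)).quasiMeasurePreserving
    exact this
  set M := h2.mk _ with hM
  have hMmeas : Measurable M := h2.measurable_mk
  have hae : (fun p : (Fin n → α) × α => g p.2) =ᵐ[Pn.prod Dm] M := h2.ae_eq_mk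
  set N₀ : Set ((Fin n → α) × α) := {p | g p.2 ≠ M p} with hN₀def
  have hN₀ : (Pn.prod Dm) N₀ = 0 := by
    rw [Filter.EventuallyEq, ae_iff] at hae
    exact hae
  set N := toMeasurable (Pn.prod Dm) N₀ with hNdef
  have hNmeas : MeasurableSet N := measurableSet_toMeasurable _ _
  have hN : (Pn.prod Dm) N = 0 := by rw [hNdef, measure_toMeasurable]; exact hN₀
  have hsec : ∀ᵐ c ∂Pn, Dm (Prod.mk c ⁻¹' N) = 0 := by
    have := (Measure.measure_prod_null (μ := Pn) (ν := Dm) hNmeas).1 hN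
    filter_upwards [this] with c hc using hc
  haveI : (ae Pn).NeBot := ae_neBot.2 (IsProbabilityMeasure.ne_zero Pn)
  obtain ⟨c, hc⟩ := hsec.exists
  refine ⟨fun a => M (c, a), hMmeas.comp measurable_prodMk_left, ?_⟩
  have hsub : {a | g a ≠ M (c, a)} ⊆ Prod.mk c ⁻¹' N := by
    intro a ha
    exact subset_toMeasurable _ _ ha
  rw [Filter.EventuallyEq, ae_iff]
  exact measure_mono_null hsub hc

lemma q_le_gY {X : Type*} [MeasurableSpace X] {k m : ℕ} {R : X → Fin k → Measure X}
    (hprob : ∀ x j, IsProbabilityMeasure (R x j)) (hm : 1 ≤ m)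
    {h : X → Bool} (hh : Measurable h) {U : X → Set (Measure X)} {ε' : ℝ} (hε'0 : 0 < ε')
    (hcov : ∀ x, ∀ u ∈ U x, ∃ j : Fin k, ∀ s : Set X, MeasurableSet s →
      |(u s).toReal - (R x j s).toReal| ≤ ε')
    (xy : X × Bool) :
    (⨆ u ∈ U xy.1, (u {z | h z ≠ xy.2}).toReal) ≤ (gY h R m xy).toReal + ε' := by
  have hB0 : 0 ≤ (gY h R m xy).toReal + ε' := by positivity
  refine Real.iSup_le (fun u => Real.iSup_le (fun hu => ?_) hB0) hB0
  obtain ⟨j, hj⟩ := hcov xy.1 u hu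
  have hE : MeasurableSet {z | h z ≠ xy.2} := (hh (measurableSet_singleton xy.2)).compl
  have h1 : (u {z | h z ≠ xy.2}).toReal ≤ (R xy.1 j {z | h z ≠ xy.2}).toReal + ε' := by
    have := hj _ hE
    have := abs_le.1 this
    linarith [this.2]
  have h2 : (R xy.1 j {z | h z ≠ xy.2}).toReal ≤ (gY h R m xy).toReal := by
    apply ENNReal.toReal_mono (ne_top_of_le_ne_top one_ne_top (gY_le_one hprob h xy))
    have := gY_ge hprob hm hh xy.1 xy.2 j
    simpa using this
  linarith

end Part4

namespace Part5

open ENNReal Part2 Part3 Part4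

set_option linter.unusedSectionVars false
set_option maxHeartbeats 1000000

lemma avg_le_one {n : ℕ} (v : Fin n → ℝ≥0∞) (hv : ∀ i, v i ≤ 1) :
    (n : ℝ≥0∞)⁻¹ * ∑ i, v i ≤ 1 := by
  rcases Nat.eq_zero_or_pos n with hn | hn
  · subst hn; simp
  · have hsum : ∑ i, v i ≤ (n : ℝ≥0∞) := by
      calc ∑ i, v i ≤ ∑ _i : Fin n, (1 : ℝ≥0∞) := Finset.sum_le_sum fun i _ => hv i
        _ = (n : ℝ≥0∞) := by simp
    calc (n : ℝ≥0∞)⁻¹ * ∑ i, v i ≤ (n : ℝ≥0∞)⁻¹ * (n : ℝ≥0∞) := mul_le_mul_right hsum _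
      _ = 1 := ENNReal.inv_mul_cancel (by exact_mod_cast hn.ne') (by simp)


lemma gprime_exists {X : Type*} [MeasurableSpace X] {k n m : ℕ}
    (D : Measure (X × Bool)) [IsProbabilityMeasure D]
    (R : X → Fin k → Measure X) (hRprob : ∀ x j, IsProbabilityMeasure (R x j))
    (hn1 : 1 ≤ n) {h : X → Bool} (hh : Measurable h)
    (hf : AEMeasurable (fun sc : Fin n → X × Bool =>
      (Measure.pi fun i : Fin n => Measure.pi fun j : Fin k =>
        Measure.pi fun _ : Fin m => R (sc i).1 j).map fun sp => (sc, sp))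
      (Measure.pi fun _ : Fin n => D)) :
    ∃ g' : X × Bool → ℝ≥0∞, Measurable g' ∧
      (fun xy => gY h R m xy) =ᵐ[D] g' := by
  obtain ⟨n', rfl⟩ : ∃ n', n = n' + 1 := ⟨n - 1, (Nat.succ_pred_eq_of_pos hn1).symm⟩
  set n := n' + 1
  set Dn : Measure (Fin n → X × Bool) := Measure.pi fun _ : Fin n => D with hDn
  set ν : (Fin n → X × Bool) → Measure (Fin n → Fin k → Fin m → X) :=
    fun sc => Measure.pi fun i : Fin n => KM R m (sc i).1 with hνdef
  haveI hKMinst : ∀ (sc : Fin n → X × Bool) (i : Fin n),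
      IsProbabilityMeasure (KM R m (sc i).1) := fun sc i => KM_prob hRprob _
  have h1 : AEMeasurable (fun sc : Fin n → X × Bool =>
      ((ν sc).map fun sp => (sc, sp)).map Prod.snd) Dn :=
    (Measure.measurable_map _ measurable_snd).comp_aemeasurable hf
  have h1' : AEMeasurable ν Dn := by
    have heq : (fun sc : Fin n → X × Bool =>
        ((ν sc).map fun sp => (sc, sp)).map Prod.snd) = ν := by
      funext sc
      rw [Measure.map_map measurable_snd measurable_prodMk_left]
      exact Measure.map_id
    rwa [heq] at h1
  have h3 : AEMeasurable (fun sc : Fin n → X × Bool => KM R m (sc 0).1) Dn := by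
    have this2 : AEMeasurable
        (fun sc : Fin n → X × Bool => (ν sc).map (Function.eval (0 : Fin n))) Dn :=
      (Measure.measurable_map _
        (measurable_pi_apply (0 : Fin n))).comp_aemeasurable h1'
    have heq : (fun sc : Fin n → X × Bool => (ν sc).map (Function.eval (0 : Fin n))) =
        fun sc => KM R m (sc 0).1 := by
      funext sc
      haveI := hKMinst sc
      exact DSHelp.pi_map_eval (fun i : Fin n => KM R m (sc i).1) 0
    rwa [heq] at this2
  have hy : Measurable fun sc : Fin n → X × Bool => (sc 0).2 :=
    measurable_snd.comp (measurable_pi_apply (0 : Fin n))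
  have h5 : AEMeasurable
      (fun sc : Fin n → X × Bool => (KM R m (sc 0).1, (sc 0).2)) Dn :=
    h3.prodMk hy.aemeasurable
  set Φ : Measure (Fin k → Fin m → X) × Bool → ℝ≥0∞ :=
    fun p => if p.2 = true then ∫⁻ w, ZE h true w ∂p.1 else ∫⁻ w, ZE h false w ∂p.1
    with hΦdef
  have hΦ : Measurable Φ := by
    refine Measurable.ite ?_ ?_ ?_
    · exact measurable_snd (measurableSet_singleton true)
    · exact (Measure.measurable_lintegral (measurable_ZE hh true)).comp measurable_fst
    · exact (Measure.measurable_lintegral (measurable_ZE hh false)).comp measurable_fst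
  have hgY0 : AEMeasurable (fun sc : Fin n → X × Bool => gY h R m (sc 0)) Dn := by
    have this2 : AEMeasurable
        (fun sc : Fin n → X × Bool => Φ (KM R m (sc 0).1, (sc 0).2)) Dn :=
      hΦ.comp_aemeasurable h5
    have heq : (fun sc : Fin n → X × Bool => Φ (KM R m (sc 0).1, (sc 0).2)) =
        fun sc => gY h R m (sc 0) := by
      funext sc
      rcases hb : (sc 0).2 with _ | _ <;> simp [hΦdef, gY, hb]
    rwa [heq] at this2
  exact exists_meas_rep D _ hgY0

lemma per_h {X : Type*} [MeasurableSpace X] {k n m : ℕ}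
    (D : Measure (X × Bool)) [IsProbabilityMeasure D]
    (U : X → Set (Measure X)) (hU : ∀ x, ∀ u ∈ U x, IsProbabilityMeasure u)
    (R : X → Fin k → Measure X) (hRsub : ∀ x j, R x j ∈ U x)
    (ε ε' : ℝ) (hε0 : 0 < ε) (hε'0 : 0 < ε')
    (hcov : ∀ x, ∀ u ∈ U x, ∃ j : Fin k, ∀ s : Set X, MeasurableSet s →
      |(u s).toReal - (R x j s).toReal| ≤ ε')
    (hn : 13 / ε ^ 2 ≤ (n : ℝ)) (hm1 : 1 ≤ m) (hn1 : 1 ≤ n)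
    {h : X → Bool} (hh : Measurable h) (hDR : ε + ε' ≤ trueDRSet D U h)
    (hf : AEMeasurable (fun sc : Fin n → X × Bool =>
      (Measure.pi fun i : Fin n => Measure.pi fun j : Fin k =>
        Measure.pi fun _ : Fin m => R (sc i).1 j).map fun sp => (sc, sp))
      (Measure.pi fun _ : Fin n => D)) :
    (2 / 5 : ℝ≥0∞) ≤ sampleMeasure D R n m {s | ε / 2 ≤ empDR h s.1 s.2} := by
  classical
  have hRprob : ∀ x j, IsProbabilityMeasure (R x j) := fun x j => hU x _ (hRsub x j)
  set Dn : Measure (Fin n → X × Bool) := Measure.pi fun _ : Fin n => D with hDn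
  haveI : IsProbabilityMeasure Dn := by rw [hDn]; infer_instance
  set ν : (Fin n → X × Bool) → Measure (Fin n → Fin k → Fin m → X) :=
    fun sc => Measure.pi fun i : Fin n => KM R m (sc i).1 with hνdef
  have hνKM : ∀ (sc : Fin n → X × Bool) (i : Fin n), KM R m (sc i).1 =
      Measure.pi fun j : Fin k => Measure.pi fun _ : Fin m => R (sc i).1 j := fun _ _ => rfl
  haveI hνprob : ∀ sc, IsProbabilityMeasure (ν sc) := by
    intro sc
    rw [hνdef]
    haveI : ∀ i : Fin n, IsProbabilityMeasure (KM R m (sc i).1) :=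
      fun i => KM_prob hRprob _
    infer_instance
  set f : (Fin n → X × Bool) → Measure ((Fin n → X × Bool) × (Fin n → Fin k → Fin m → X)) :=
    fun sc => (ν sc).map fun sp => (sc, sp) with hfdef
  have hfae : AEMeasurable f Dn := hf
  have hμdef : sampleMeasure D R n m = Dn.bind f := rfl
  set f' := hfae.mk f with hf'def
  have hf'meas : Measurable f' := hfae.measurable_mk
  have hff' : f =ᵐ[Dn] f' := hfae.ae_eq_mk
  have hbind : Dn.bind f = Dn.bind f' := by
    show ((Dn.map f).join) = ((Dn.map f').join)
    rw [Measure.map_congr hff']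
  have hfuniv : ∀ sc, f sc Set.univ = 1 := by
    intro sc
    rw [hfdef]
    simp only
    rw [Measure.map_apply measurable_prodMk_left MeasurableSet.univ]
    simp
  haveI hμprob : IsProbabilityMeasure (Dn.bind f) := by
    constructor
    rw [hbind, Measure.bind_apply MeasurableSet.univ hf'meas.aemeasurable]
    have : ∫⁻ sc, f' sc Set.univ ∂Dn = ∫⁻ sc, f sc Set.univ ∂Dn :=
      lintegral_congr_ae (by filter_upwards [hff'] with sc hsc; rw [hsc])
    rw [this]
    simp only [hfuniv]
    simp
  have LemA : ∀ φ : ((Fin n → X × Bool) × (Fin n → Fin k → Fin m → X)) → ℝ≥0∞,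
      Measurable φ → ∫⁻ s, φ s ∂(Dn.bind f) = ∫⁻ sc, ∫⁻ sp, φ (sc, sp) ∂(ν sc) ∂Dn := by
    intro φ hφ
    rw [hbind, Measure.lintegral_bind hf'meas.aemeasurable hφ.aemeasurable]
    refine lintegral_congr_ae ?_
    filter_upwards [hff'] with sc hsc
    rw [← hsc, hfdef]
    simp only
    rw [lintegral_map hφ measurable_prodMk_left]
  set Zi : Fin n → ((Fin n → X × Bool) × (Fin n → Fin k → Fin m → X)) → ℝ≥0∞ :=
    fun i s => ZE h (s.1 i).2 (s.2 i) with hZidef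
  have hZimeas : ∀ i, Measurable (Zi i) := by
    intro i
    have hb : Measurable fun s : ((Fin n → X × Bool) × (Fin n → Fin k → Fin m → X)) =>
        (s.1 i).2 := measurable_snd.comp ((measurable_pi_apply i).comp measurable_fst)
    have hw : Measurable fun s : ((Fin n → X × Bool) × (Fin n → Fin k → Fin m → X)) =>
        s.2 i := (measurable_pi_apply i).comp measurable_snd
    have : Zi i = fun s => if (s.1 i).2 = true then ZE h true (s.2 i) else ZE h false (s.2 i) := by
      funext s
      rcases hbool : (s.1 i).2 with _ | _ <;> simp [hZidef, hbool]
    rw [this]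
    exact Measurable.ite (hb (measurableSet_singleton true))
      ((measurable_ZE hh true).comp hw) ((measurable_ZE hh false).comp hw)
  have hZile1 : ∀ i s, Zi i s ≤ 1 := fun i s => ZE_le_one h _ _
  set WE : ((Fin n → X × Bool) × (Fin n → Fin k → Fin m → X)) → ℝ≥0∞ :=
    fun s => (n : ℝ≥0∞)⁻¹ * ∑ i, Zi i s with hWEdef
  have hWEmeas : Measurable WE := by
    apply Measurable.const_mul
    exact Finset.measurable_sum _ fun i _ => hZimeas i
  have hWEle1 : ∀ s, WE s ≤ 1 := fun s => avg_le_one _ (fun i => hZile1 i s)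
  have hWEfin : ∀ s, WE s ≠ ∞ := fun s => ne_top_of_le_ne_top one_ne_top (hWEle1 s)
  have bridge : ∀ s, empDR h s.1 s.2 = (WE s).toReal := by
    intro s
    rw [hWEdef]
    simp only
    rw [ENNReal.toReal_mul, ENNReal.toReal_inv,
      ENNReal.toReal_sum (fun i _ => ne_top_of_le_ne_top one_ne_top (hZile1 i s))]
    rw [empDR, one_div]
    simp only [ENNReal.toReal_natCast]
    congr 1
    refine Finset.sum_congr rfl fun i _ => ?_
    exact (ZE_toReal h (s.1 i).2 (s.2 i)).symm
  have hKMinst : ∀ sc : Fin n → X × Bool, ∀ i : Fin n,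
      IsProbabilityMeasure (KM R m (sc i).1) := fun sc i => KM_prob hRprob _
  have inner1 : ∀ (sc : Fin n → X × Bool) (i : Fin n),
      ∫⁻ sp, Zi i (sc, sp) ∂(ν sc) = gY h R m (sc i) := by
    intro sc i
    haveI := hKMinst sc
    have hfmeas : Measurable fun w : Fin k → Fin m → X => ZE h (sc i).2 w :=
      measurable_ZE hh _
    have step : ∫⁻ sp, Zi i (sc, sp) ∂(ν sc) =
        ∫⁻ w, ZE h (sc i).2 w ∂(KM R m (sc i).1) := by
      conv_rhs => rw [← DSHelp.pi_map_eval (fun i' : Fin n => KM R m (sc i').1) i]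
      rw [lintegral_map hfmeas (measurable_pi_apply i)]
    rw [step]
    rfl
  have inner2 : ∀ (sc : Fin n → X × Bool) (i j : Fin n), i ≠ j →
      ∫⁻ sp, Zi i (sc, sp) * Zi j (sc, sp) ∂(ν sc) = gY h R m (sc i) * gY h R m (sc j) := by
    intro sc i j hij
    haveI := hKMinst sc
    have hFi : Measurable fun w : Fin k → Fin m → X => ZE h (sc i).2 w := measurable_ZE hh _
    have hFj : Measurable fun w : Fin k → Fin m → X => ZE h (sc j).2 w := measurable_ZE hh _
    have key := DSHelp.pi_map_pair (fun i' : Fin n => KM R m (sc i').1) hij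
    have hpairmeas : Measurable fun sp : Fin n → Fin k → Fin m → X => (sp i, sp j) :=
      (measurable_pi_apply i).prodMk (measurable_pi_apply j)
    have hfun : Measurable fun p : (Fin k → Fin m → X) × (Fin k → Fin m → X) =>
        ZE h (sc i).2 p.1 * ZE h (sc j).2 p.2 :=
      (hFi.comp measurable_fst).mul (hFj.comp measurable_snd)
    have step : ∫⁻ sp, Zi i (sc, sp) * Zi j (sc, sp) ∂(ν sc) =
        ∫⁻ p, ZE h (sc i).2 p.1 * ZE h (sc j).2 p.2
          ∂((KM R m (sc i).1).prod (KM R m (sc j).1)) := by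
      conv_rhs => rw [← key]
      rw [lintegral_map hfun hpairmeas]
    rw [step, lintegral_prod_mul hFi.aemeasurable hFj.aemeasurable]
    rfl
  obtain ⟨g', hg'meas, hgae⟩ : ∃ g' : X × Bool → ℝ≥0∞, Measurable g' ∧
      (fun xy => gY h R m xy) =ᵐ[D] g' :=
    gprime_exists D R hRprob hn1 hh hf
  have hS0 : D (toMeasurable D {xy | gY h R m xy ≠ g' xy}) = 0 := by
    rw [measure_toMeasurable]
    rw [Filter.EventuallyEq, ae_iff] at hgae
    exact hgae
  have hpull : ∀ i : Fin n, (fun sc : Fin n → X × Bool => gY h R m (sc i)) =ᵐ[Dn]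
      fun sc => g' (sc i) := by
    intro i
    have hmapped : Dn (Function.eval i ⁻¹' toMeasurable D {xy | gY h R m xy ≠ g' xy}) = 0 := by
      rw [← Measure.map_apply (measurable_pi_apply i)
        (measurableSet_toMeasurable _ _)]
      rw [show Dn.map (Function.eval i) = D from DSHelp.pi_map_eval (fun _ : Fin n => D) i]
      exact hS0
    rw [Filter.EventuallyEq, ae_iff]
    refine measure_mono_null (fun sc hsc => ?_) hmapped
    exact subset_toMeasurable _ _ hsc
  set a1 : ℝ≥0∞ := ∫⁻ xy, g' xy ∂D with ha1def
  have hn_ne : (n : ℝ≥0∞) ≠ 0 := by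
    exact_mod_cast Nat.one_le_iff_ne_zero.1 hn1
  have hninv_ne_top : ((n : ℝ≥0∞))⁻¹ ≠ ∞ := ENNReal.inv_ne_top.2 hn_ne
  have hcoord : ∀ i : Fin n, ∫⁻ sc, g' (sc i) ∂Dn = a1 := by
    intro i
    rw [ha1def]
    conv_rhs => rw [show D = Dn.map (Function.eval i) from
      (DSHelp.pi_map_eval (fun _ : Fin n => D) i).symm]
    rw [lintegral_map hg'meas (measurable_pi_apply i)]
  have hcoord2 : ∀ i j : Fin n, i ≠ j →
      ∫⁻ sc, g' (sc i) * g' (sc j) ∂Dn = a1 * a1 := by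
    intro i j hij
    have key := DSHelp.pi_map_pair (fun _ : Fin n => D) hij
    have hpairmeas : Measurable fun sc : Fin n → X × Bool => (sc i, sc j) :=
      (measurable_pi_apply i).prodMk (measurable_pi_apply j)
    have hfun : Measurable fun p : (X × Bool) × (X × Bool) => g' p.1 * g' p.2 :=
      (hg'meas.comp measurable_fst).mul (hg'meas.comp measurable_snd)
    have step : ∫⁻ sc, g' (sc i) * g' (sc j) ∂Dn =
        ∫⁻ p, g' p.1 * g' p.2 ∂(D.prod D) := by
      conv_rhs => rw [← key]
      rw [lintegral_map hfun hpairmeas]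
    rw [step, lintegral_prod_mul hg'meas.aemeasurable hg'meas.aemeasurable]
  have EW1 : ∫⁻ s, WE s ∂(Dn.bind f) = a1 := by
    rw [LemA WE hWEmeas]
    have hinner : ∀ sc : Fin n → X × Bool,
        ∫⁻ sp, WE (sc, sp) ∂(ν sc) = (n : ℝ≥0∞)⁻¹ * ∑ i, gY h R m (sc i) := by
      intro sc
      have : (fun sp => WE (sc, sp)) =
          fun sp => (n : ℝ≥0∞)⁻¹ * ∑ i, Zi i (sc, sp) := rfl
      rw [this, lintegral_const_mul' _ _ hninv_ne_top,
        lintegral_finset_sum _ (fun i _ => (show Measurable fun sp => Zi i (sc, sp) from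
          (hZimeas i).comp measurable_prodMk_left))]
      congr 1
      exact Finset.sum_congr rfl fun i _ => inner1 sc i
    calc ∫⁻ sc, (∫⁻ sp, WE (sc, sp) ∂(ν sc)) ∂Dn
        = ∫⁻ sc, (n : ℝ≥0∞)⁻¹ * ∑ i, gY h R m (sc i) ∂Dn := by
          exact lintegral_congr fun sc => hinner sc
      _ = ∫⁻ sc, (n : ℝ≥0∞)⁻¹ * ∑ i, g' (sc i) ∂Dn := by
          refine lintegral_congr_ae ?_
          have hall : ∀ᵐ sc ∂Dn, ∀ i : Fin n, gY h R m (sc i) = g' (sc i) :=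
            ae_all_iff.2 fun i => hpull i
          filter_upwards [hall] with sc hsc
          rw [Finset.sum_congr rfl fun i _ => hsc i]
      _ = (n : ℝ≥0∞)⁻¹ * ∑ i : Fin n, a1 := by
          rw [lintegral_const_mul' _ _ hninv_ne_top,
            lintegral_finset_sum _ (fun i _ => (show Measurable fun sc : Fin n → X × Bool =>
              g' (sc i) from hg'meas.comp (measurable_pi_apply i)))]
          congr 1
          exact Finset.sum_congr rfl fun i _ => hcoord i
      _ = a1 := by
          rw [Finset.sum_const, Finset.card_univ, Fintype.card_fin, nsmul_eq_mul,
            ← mul_assoc, ENNReal.inv_mul_cancel hn_ne (by simp), one_mul]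
  have EW2 : ∫⁻ s, WE s * WE s ∂(Dn.bind f) ≤ (n : ℝ≥0∞)⁻¹ + a1 * a1 := by
    rw [LemA (fun s => WE s * WE s) (hWEmeas.mul hWEmeas)]
    have hinner : ∀ sc : Fin n → X × Bool,
        ∫⁻ sp, WE (sc, sp) * WE (sc, sp) ∂(ν sc) ≤
          (n : ℝ≥0∞)⁻¹ * (n : ℝ≥0∞)⁻¹ *
            ((n : ℝ≥0∞) + ∑ i, ∑ j ∈ Finset.univ.erase i,
              gY h R m (sc i) * gY h R m (sc j)) := by
      intro sc
      haveI := hνprob sc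
      have hexp : (fun sp => WE (sc, sp) * WE (sc, sp)) =
          fun sp => (n : ℝ≥0∞)⁻¹ * (n : ℝ≥0∞)⁻¹ *
            ∑ i, ∑ j, Zi i (sc, sp) * Zi j (sc, sp) := by
        funext sp
        show ((n : ℝ≥0∞)⁻¹ * ∑ i, Zi i (sc, sp)) * ((n : ℝ≥0∞)⁻¹ * ∑ j, Zi j (sc, sp)) = _
        rw [show ((n : ℝ≥0∞)⁻¹ * ∑ i, Zi i (sc, sp)) * ((n : ℝ≥0∞)⁻¹ * ∑ j, Zi j (sc, sp))
            = (n : ℝ≥0∞)⁻¹ * (n : ℝ≥0∞)⁻¹ *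
              ((∑ i, Zi i (sc, sp)) * (∑ j, Zi j (sc, sp))) from by ring,
          Finset.sum_mul_sum]
      rw [hexp, lintegral_const_mul' _ _ (by
          exact ENNReal.mul_ne_top hninv_ne_top hninv_ne_top),
        lintegral_finset_sum _ (fun i _ => Finset.measurable_sum _ fun j _ =>
          (show Measurable fun sp => Zi i (sc, sp) * Zi j (sc, sp) from
            ((hZimeas i).comp measurable_prodMk_left).mul
              ((hZimeas j).comp measurable_prodMk_left)))]
      refine mul_le_mul_right ?_ _
      have hrow : ∀ i : Fin n,
          ∫⁻ sp, (∑ j, Zi i (sc, sp) * Zi j (sc, sp)) ∂(ν sc) ≤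
            1 + ∑ j ∈ Finset.univ.erase i, gY h R m (sc i) * gY h R m (sc j) := by
        intro i
        rw [lintegral_finset_sum _ (fun j _ =>
          (show Measurable fun sp => Zi i (sc, sp) * Zi j (sc, sp) from
            ((hZimeas i).comp measurable_prodMk_left).mul
              ((hZimeas j).comp measurable_prodMk_left)))]
        rw [← Finset.add_sum_erase _ _ (Finset.mem_univ i)]
        refine add_le_add ?_ ?_
        · calc ∫⁻ sp, Zi i (sc, sp) * Zi i (sc, sp) ∂(ν sc) ≤ ∫⁻ _, 1 ∂(ν sc) :=
              lintegral_mono fun sp => mul_le_one' (hZile1 i _) (hZile1 i _)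
            _ = 1 := by simp
        · refine Finset.sum_le_sum fun j hj => ?_
          exact le_of_eq (inner2 sc i j (Finset.ne_of_mem_erase hj).symm)
      calc ∑ i, ∫⁻ sp, (∑ j, Zi i (sc, sp) * Zi j (sc, sp)) ∂(ν sc)
          ≤ ∑ i, (1 + ∑ j ∈ Finset.univ.erase i, gY h R m (sc i) * gY h R m (sc j)) :=
            Finset.sum_le_sum fun i _ => hrow i
        _ = (n : ℝ≥0∞) + ∑ i, ∑ j ∈ Finset.univ.erase i,
              gY h R m (sc i) * gY h R m (sc j) := by
            rw [Finset.sum_add_distrib]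
            simp
    calc ∫⁻ sc, (∫⁻ sp, WE (sc, sp) * WE (sc, sp) ∂(ν sc)) ∂Dn
        ≤ ∫⁻ sc, (n : ℝ≥0∞)⁻¹ * (n : ℝ≥0∞)⁻¹ *
            ((n : ℝ≥0∞) + ∑ i, ∑ j ∈ Finset.univ.erase i,
              gY h R m (sc i) * gY h R m (sc j)) ∂Dn := lintegral_mono fun sc => hinner sc
      _ = ∫⁻ sc, (n : ℝ≥0∞)⁻¹ * (n : ℝ≥0∞)⁻¹ *
            ((n : ℝ≥0∞) + ∑ i, ∑ j ∈ Finset.univ.erase i,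
              g' (sc i) * g' (sc j)) ∂Dn := by
          refine lintegral_congr_ae ?_
          have hall : ∀ᵐ sc ∂Dn, ∀ i : Fin n, gY h R m (sc i) = g' (sc i) :=
            ae_all_iff.2 fun i => hpull i
          filter_upwards [hall] with sc hsc
          congr 1
          congr 1
          refine Finset.sum_congr rfl fun i _ => Finset.sum_congr rfl fun j _ => ?_
          rw [hsc i, hsc j]
      _ = (n : ℝ≥0∞)⁻¹ * (n : ℝ≥0∞)⁻¹ *
            ((n : ℝ≥0∞) + ∑ i : Fin n, ∑ j ∈ Finset.univ.erase i, a1 * a1) := by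
          rw [lintegral_const_mul' _ _ (ENNReal.mul_ne_top hninv_ne_top hninv_ne_top)]
          congr 1
          rw [lintegral_add_left measurable_const]
          congr 1
          · simp
          · rw [lintegral_finset_sum _ (fun i _ => Finset.measurable_sum _ fun j _ =>
              (show Measurable fun sc : Fin n → X × Bool => g' (sc i) * g' (sc j) from
                (hg'meas.comp (measurable_pi_apply i)).mul
                  (hg'meas.comp (measurable_pi_apply j))))]
            refine Finset.sum_congr rfl fun i _ => ?_
            rw [lintegral_finset_sum _ (fun j _ =>
              (show Measurable fun sc : Fin n → X × Bool => g' (sc i) * g' (sc j) from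
                (hg'meas.comp (measurable_pi_apply i)).mul
                  (hg'meas.comp (measurable_pi_apply j))))]
            exact Finset.sum_congr rfl fun j hj =>
              hcoord2 i j (Finset.ne_of_mem_erase hj).symm
      _ ≤ (n : ℝ≥0∞)⁻¹ * (n : ℝ≥0∞)⁻¹ *
            ((n : ℝ≥0∞) + (n : ℝ≥0∞) * ((n : ℝ≥0∞) * (a1 * a1))) := by
          gcongr
          calc ∑ i : Fin n, ∑ j ∈ Finset.univ.erase i, a1 * a1
              ≤ ∑ _i : Fin n, (n : ℝ≥0∞) * (a1 * a1) := by
                refine Finset.sum_le_sum fun i _ => ?_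
                rw [Finset.sum_const, nsmul_eq_mul]
                gcongr
                exact_mod_cast le_trans (Nat.cast_le.2 (Finset.card_erase_le (a := i)
                  (s := Finset.univ))) (by simp)
            _ = (n : ℝ≥0∞) * ((n : ℝ≥0∞) * (a1 * a1)) := by
                rw [Finset.sum_const, Finset.card_univ, Fintype.card_fin, nsmul_eq_mul]
      _ = (n : ℝ≥0∞)⁻¹ + a1 * a1 := by
          have h1 : (n : ℝ≥0∞)⁻¹ * (n : ℝ≥0∞) = 1 :=
            ENNReal.inv_mul_cancel hn_ne (by simp)
          have e1 : (n : ℝ≥0∞)⁻¹ * (n : ℝ≥0∞)⁻¹ *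
              ((n : ℝ≥0∞) + (n : ℝ≥0∞) * ((n : ℝ≥0∞) * (a1 * a1))) =
              ((n : ℝ≥0∞)⁻¹ * (n : ℝ≥0∞)) * (n : ℝ≥0∞)⁻¹ +
                ((n : ℝ≥0∞)⁻¹ * (n : ℝ≥0∞)) * (((n : ℝ≥0∞)⁻¹ * (n : ℝ≥0∞))) *
                  (a1 * a1) := by ring
          rw [e1, h1]
          simp
  have ha1eq : a1 = ∫⁻ xy, gY h R m xy ∂D := (lintegral_congr_ae hgae).symm
  have ha1top : a1 ≤ 1 := by
    rw [ha1eq]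
    calc ∫⁻ xy, gY h R m xy ∂D ≤ ∫⁻ _, 1 ∂D :=
          lintegral_mono fun xy => gY_le_one hRprob h xy
      _ = 1 := by simp
  have ha1fin : a1 ≠ ∞ := ne_top_of_le_ne_top one_ne_top ha1top
  set aR := a1.toReal with haRdef
  have haRle1 : aR ≤ 1 := by
    have := ENNReal.toReal_mono one_ne_top ha1top
    simpa using this
  have haRnn : 0 ≤ aR := ENNReal.toReal_nonneg
  set W : ((Fin n → X × Bool) × (Fin n → Fin k → Fin m → X)) → ℝ :=
    fun s => empDR h s.1 s.2 with hWdef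
  have hWeq : ∀ s, W s = (WE s).toReal := bridge
  have hWmeas : Measurable W := by
    rw [show W = fun s => (WE s).toReal from funext hWeq]
    exact ENNReal.measurable_toReal.comp hWEmeas
  have hWnn : ∀ s, 0 ≤ W s := fun s => (hWeq s) ▸ ENNReal.toReal_nonneg
  have hWle1 : ∀ s, W s ≤ 1 := fun s => by
    rw [hWeq s]
    have := ENNReal.toReal_mono one_ne_top (hWEle1 s)
    simpa using this
  have hofW : ∀ s, ENNReal.ofReal (W s) = WE s := fun s => by
    rw [hWeq s, ENNReal.ofReal_toReal (hWEfin s)]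
  have hWint : Integrable W (Dn.bind f) := by
    refine Integrable.mono' (integrable_const (1 : ℝ)) hWmeas.aestronglyMeasurable ?_
    filter_upwards with s
    rw [Real.norm_eq_abs, abs_of_nonneg (hWnn s)]
    exact hWle1 s
  have hW2int : Integrable (fun s => W s * W s) (Dn.bind f) := by
    refine Integrable.mono' (integrable_const (1 : ℝ))
      (hWmeas.mul hWmeas).aestronglyMeasurable ?_
    filter_upwards with s
    rw [Real.norm_eq_abs, abs_of_nonneg (mul_nonneg (hWnn s) (hWnn s))]
    exact mul_le_one₀ (hWle1 s) (hWnn s) (hWle1 s)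
  have hIntW : ∫ s, W s ∂(Dn.bind f) = aR := by
    rw [integral_eq_lintegral_of_nonneg_ae (Filter.Eventually.of_forall hWnn)
      hWmeas.aestronglyMeasurable]
    rw [lintegral_congr fun s => hofW s, EW1]
  have hIntW2 : ∫ s, W s * W s ∂(Dn.bind f) ≤ 1 / (n : ℝ) + aR * aR := by
    rw [integral_eq_lintegral_of_nonneg_ae
      (Filter.Eventually.of_forall fun s => mul_nonneg (hWnn s) (hWnn s))
      (hWmeas.mul hWmeas).aestronglyMeasurable]
    have hre : ∫⁻ s, ENNReal.ofReal (W s * W s) ∂(Dn.bind f) =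
        ∫⁻ s, WE s * WE s ∂(Dn.bind f) :=
      lintegral_congr fun s => by rw [ENNReal.ofReal_mul (hWnn s), hofW]
    rw [hre]
    have hfin : ((n : ℝ≥0∞)⁻¹ + a1 * a1) ≠ ∞ :=
      ENNReal.add_ne_top.2 ⟨hninv_ne_top, ENNReal.mul_ne_top ha1fin ha1fin⟩
    have := ENNReal.toReal_mono hfin EW2
    calc (∫⁻ s, WE s * WE s ∂(Dn.bind f)).toReal ≤
        ((n : ℝ≥0∞)⁻¹ + a1 * a1).toReal := this
      _ = 1 / (n : ℝ) + aR * aR := by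
        rw [ENNReal.toReal_add hninv_ne_top (ENNReal.mul_ne_top ha1fin ha1fin),
          ENNReal.toReal_mul, ENNReal.toReal_inv, ENNReal.toReal_natCast, one_div]
  have haRge : ε ≤ aR := by
    by_cases hq : Integrable
      (fun xy : X × Bool => ⨆ u ∈ U xy.1, (u {z | h z ≠ xy.2}).toReal) D
    · have hg'bd : ∀ᵐ xy ∂D, (g' xy).toReal ≤ 1 := by
        filter_upwards [hgae] with xy hxy
        rw [← hxy]
        have := ENNReal.toReal_mono one_ne_top (gY_le_one (m := m) hRprob h xy)
        simpa using this
      have hg'int : Integrable (fun xy => (g' xy).toReal) D := by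
        refine Integrable.mono' (integrable_const (1 : ℝ))
          (ENNReal.measurable_toReal.comp hg'meas).aestronglyMeasurable ?_
        filter_upwards [hg'bd] with xy hxy
        rw [Real.norm_eq_abs, abs_of_nonneg ENNReal.toReal_nonneg]
        exact hxy
      have step1 : trueDRSet D U h ≤ ∫ xy, ((g' xy).toReal + ε') ∂D := by
        rw [trueDRSet]
        refine integral_mono_ae hq (hg'int.add (integrable_const _)) ?_
        filter_upwards [hgae] with xy hxy
        rw [← hxy]
        exact q_le_gY hRprob hm1 hh hε'0 hcov xy
      have hg'lt : ∀ᵐ xy ∂D, g' xy < ∞ := by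
        filter_upwards [hgae] with xy hxy
        rw [← hxy]
        exact lt_of_le_of_lt (gY_le_one hRprob h xy) (by simp)
      have step2 : ∫ xy, ((g' xy).toReal + ε') ∂D = aR + ε' := by
        rw [integral_add hg'int (integrable_const _), integral_const]
        simp only [measure_univ, ENNReal.toReal_one, smul_eq_mul, one_mul, probReal_univ]
        congr 1
        rw [integral_toReal hg'meas.aemeasurable hg'lt]
      rw [step2] at step1
      linarith
    · exfalso
      have : trueDRSet D U h = 0 := integral_undef hq
      rw [this] at hDR
      linarith
  have hcpos : 0 < aR - ε / 2 := by linarith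
  have hc : ε / 2 * (ε / 2) ≤ (aR - ε / 2) * (aR - ε / 2) := by nlinarith
  set V : ((Fin n → X × Bool) × (Fin n → Fin k → Fin m → X)) → ℝ≥0∞ :=
    fun s => ENNReal.ofReal ((W s - aR) * (W s - aR)) with hVdef
  have hVmeas : Measurable V :=
    ENNReal.measurable_ofReal.comp
      ((hWmeas.sub measurable_const).mul (hWmeas.sub measurable_const))
  have hWsubint : Integrable (fun s => (W s - aR) * (W s - aR)) (Dn.bind f) := by
    refine Integrable.mono' (integrable_const (4 : ℝ))
      ((hWmeas.sub measurable_const).mul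
        (hWmeas.sub measurable_const)).aestronglyMeasurable ?_
    filter_upwards with s
    rw [Real.norm_eq_abs, abs_of_nonneg (mul_self_nonneg _)]
    nlinarith [hWnn s, hWle1 s, haRnn, haRle1]
  have hVint : ∫⁻ s, V s ∂(Dn.bind f) =
      ENNReal.ofReal (∫ s, (W s - aR) * (W s - aR) ∂(Dn.bind f)) :=
    (ofReal_integral_eq_lintegral_ofReal hWsubint
      (Filter.Eventually.of_forall fun s => mul_self_nonneg _)).symm
  have hvar : ∫ s, (W s - aR) * (W s - aR) ∂(Dn.bind f) ≤ 1 / (n : ℝ) := by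
    have hexp : (fun s => (W s - aR) * (W s - aR)) =
        fun s => (W s * W s - (2 * aR) * W s) + aR * aR := funext fun s => by ring
    rw [hexp, integral_add (show Integrable
        (fun s => W s * W s - (2 * aR) * W s) (Dn.bind f) from
        hW2int.sub (hWint.const_mul (2 * aR))) (integrable_const _),
      integral_sub hW2int (hWint.const_mul (2 * aR)), integral_const_mul, integral_const,
      hIntW]
    simp only [measure_univ, ENNReal.toReal_one, smul_eq_mul, one_mul, probReal_univ]
    nlinarith [hIntW2]
  have harith : 1 / (n : ℝ) / ((aR - ε / 2) * (aR - ε / 2)) ≤ 4 / 13 := by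
    have hn0 : (0 : ℝ) < n := lt_of_lt_of_le (by positivity) hn
    have h13 : (13 : ℝ) ≤ n * ε ^ 2 := by
      have := (div_le_iff₀ (by positivity : (0 : ℝ) < ε ^ 2)).1 hn
      linarith
    rw [div_div, div_le_div_iff₀ (by positivity) (by norm_num)]
    nlinarith [hc, hcpos, hn0, hε0]
  have hbad : (Dn.bind f) {s | W s < ε / 2} ≤ ENNReal.ofReal (4 / 13) := by
    have hsub : {s | W s < ε / 2} ⊆
        {s | ENNReal.ofReal ((aR - ε / 2) * (aR - ε / 2)) ≤ V s} := by
      intro s hs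
      have hs' : W s < ε / 2 := hs
      have h2 : (aR - ε / 2) * (aR - ε / 2) ≤ (W s - aR) * (W s - aR) := by nlinarith
      exact ENNReal.ofReal_le_ofReal h2
    have hcpos' : (0 : ℝ) < (aR - ε / 2) * (aR - ε / 2) := by positivity
    calc (Dn.bind f) {s | W s < ε / 2} ≤
        (Dn.bind f) {s | ENNReal.ofReal ((aR - ε / 2) * (aR - ε / 2)) ≤ V s} :=
          measure_mono hsub
      _ ≤ (∫⁻ s, V s ∂(Dn.bind f)) / ENNReal.ofReal ((aR - ε / 2) * (aR - ε / 2)) :=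
          meas_ge_le_lintegral_div hVmeas.aemeasurable
            (by simp [ENNReal.ofReal_eq_zero, not_le, hcpos']) ENNReal.ofReal_ne_top
      _ = ENNReal.ofReal (∫ s, (W s - aR) * (W s - aR) ∂(Dn.bind f)) /
            ENNReal.ofReal ((aR - ε / 2) * (aR - ε / 2)) := by rw [hVint]
      _ ≤ ENNReal.ofReal (1 / (n : ℝ)) /
            ENNReal.ofReal ((aR - ε / 2) * (aR - ε / 2)) :=
          ENNReal.div_le_div_right (ENNReal.ofReal_le_ofReal hvar) _
      _ = ENNReal.ofReal (1 / (n : ℝ) / ((aR - ε / 2) * (aR - ε / 2))) :=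
          (ENNReal.ofReal_div_of_pos hcpos').symm
      _ ≤ ENNReal.ofReal (4 / 13) := ENNReal.ofReal_le_ofReal harith
  have hEbadmeas : MeasurableSet {s : ((Fin n → X × Bool) × (Fin n → Fin k → Fin m → X)) |
      W s < ε / 2} := measurableSet_lt hWmeas measurable_const
  have hcompl : {s : ((Fin n → X × Bool) × (Fin n → Fin k → Fin m → X)) |
      ε / 2 ≤ empDR h s.1 s.2} = {s | W s < ε / 2}ᶜ := by
    ext s
    simp [hWdef, not_lt]
  rw [hμdef, hcompl, measure_compl hEbadmeas (measure_ne_top _ _), measure_univ]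
  have h25 : (2 / 5 : ℝ≥0∞) = ENNReal.ofReal (2 / 5) := by
    rw [ENNReal.ofReal_div_of_pos (by norm_num)]
    norm_num
  calc (2 / 5 : ℝ≥0∞) ≤ 1 - ENNReal.ofReal (4 / 13) := by
        rw [show (1 : ℝ≥0∞) = ENNReal.ofReal 1 from ENNReal.ofReal_one.symm,
          ← ENNReal.ofReal_sub _ (by norm_num), h25]
        exact ENNReal.ofReal_le_ofReal (by norm_num)
    _ ≤ 1 - (Dn.bind f) {s | W s < ε / 2} := tsub_le_tsub_left hbad 1



end Part5

open scoped ENNReal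

/-- **Lemma (Model I, double sampling, realizable case).** Suppose each (possibly
infinite) perturbation family `U x` admits a representative set `R x ⊆ U x` of at most
`k` distributions such that every `u ∈ U x` is within total variation distance `ε'` of
some `R x j`.  Let `S` and `S'` be two independent samples, each consisting of
`n ≥ 13/ε²` i.i.d. clean examples from `D` together with `m ≥ (32/ε²)·log(200/ε)` i.i.d.
perturbations from each representative distribution `R x j` of each clean example.  Let
`A` be the event that some `h ∈ H` has `DR_S(h) = 0` but `DR_D(h) ≥ ε + ε'`, and `B` the
event that some `h ∈ H` has `DR_S(h) = 0` but `DR_{S'}(h) ≥ ε/2`.  Then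
`P(B) ≥ (2/5)·P(A)`. -/
theorem double_sampling_model1_realizable
    {X : Type*} [MeasurableSpace X] {k n m : ℕ}
    (H : Set (X → Bool)) (hH : ∀ h ∈ H, Measurable h)
    (D : Measure (X × Bool)) [IsProbabilityMeasure D]
    (U : X → Set (Measure X)) (hU : ∀ x, ∀ u ∈ U x, IsProbabilityMeasure u)
    (R : X → Fin k → Measure X) (hRsub : ∀ x j, R x j ∈ U x)
    (ε ε' : ℝ) (hε0 : 0 < ε) (hε1 : ε < 1) (hε'0 : 0 < ε') (hε'1 : ε' < 1)
    -- every `u ∈ U x` is within total variation distance `ε'` of some `R x j`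
    (hcov : ∀ x, ∀ u ∈ U x, ∃ j : Fin k, ∀ s : Set X, MeasurableSet s →
      |(u s).toReal - (R x j s).toReal| ≤ ε')
    (hn : 13 / ε ^ 2 ≤ (n : ℝ))
    (hm : 32 / ε ^ 2 * Real.log (200 / ε) ≤ (m : ℝ)) :
    2 / 5 * ((sampleMeasure D R n m).prod (sampleMeasure D R n m))
        {p | ∃ h ∈ H, empDR h p.1.1 p.1.2 = 0 ∧ ε + ε' ≤ trueDRSet D U h} ≤
      ((sampleMeasure D R n m).prod (sampleMeasure D R n m))
        {p | ∃ h ∈ H, empDR h p.1.1 p.1.2 = 0 ∧ ε / 2 ≤ empDR h p.2.1 p.2.2} := by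
  classical
  set Dn : Measure (Fin n → X × Bool) := Measure.pi fun _ : Fin n => D with hDn
  haveI : IsProbabilityMeasure Dn := by rw [hDn]; infer_instance
  set f : (Fin n → X × Bool) → Measure ((Fin n → X × Bool) × (Fin n → Fin k → Fin m → X)) :=
    fun sc => (Measure.pi fun i : Fin n => Measure.pi fun j : Fin k =>
      Measure.pi fun _ : Fin m => R (sc i).1 j).map fun sp => (sc, sp) with hfdef
  have hμdef : sampleMeasure D R n m = Dn.bind f := rfl
  by_cases hf : AEMeasurable f Dn
  · -- good case
    have hRprob : ∀ x j, IsProbabilityMeasure (R x j) := fun x j => hU x _ (hRsub x j)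
    have hn1 : 1 ≤ n := by
      rcases Nat.eq_zero_or_pos n with h0 | h0
      · exfalso
        subst h0
        have : (0 : ℝ) < 13 / ε ^ 2 := by positivity
        simp only [Nat.cast_zero] at hn
        linarith
      · exact h0
    have hm1 : 1 ≤ m := by
      rcases Nat.eq_zero_or_pos m with h0 | h0
      · exfalso
        subst h0
        have hlog : 0 < Real.log (200 / ε) := by
          apply Real.log_pos
          rw [lt_div_iff₀ hε0]
          linarith
        have : (0 : ℝ) < 32 / ε ^ 2 * Real.log (200 / ε) := by positivity
        simp only [Nat.cast_zero] at hm
        linarith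
      · exact h0
    have hνprob : ∀ sc : Fin n → X × Bool, IsProbabilityMeasure
        (Measure.pi fun i : Fin n => Measure.pi fun j : Fin k =>
          Measure.pi fun _ : Fin m => R (sc i).1 j) := by
      intro sc
      haveI : ∀ (i : Fin n) (j : Fin k), IsProbabilityMeasure (R (sc i).1 j) :=
        fun i j => hRprob _ j
      infer_instance
    haveI hμprob : IsProbabilityMeasure (Dn.bind f) := by
      set f' := hf.mk f with hf'def
      have hf'meas : Measurable f' := hf.measurable_mk
      have hff' : f =ᵐ[Dn] f' := hf.ae_eq_mk
      have hbind : Dn.bind f = Dn.bind f' := by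
        show ((Dn.map f).join) = ((Dn.map f').join)
        rw [Measure.map_congr hff']
      constructor
      rw [hbind, Measure.bind_apply MeasurableSet.univ hf'meas.aemeasurable]
      have heq : ∫⁻ sc, f' sc Set.univ ∂Dn = ∫⁻ sc, f sc Set.univ ∂Dn :=
        lintegral_congr_ae (by filter_upwards [hff'] with sc hsc; rw [hsc])
      rw [heq]
      have huniv : ∀ sc, f sc Set.univ = 1 := by
        intro sc
        rw [hfdef]
        simp only
        rw [Measure.map_apply measurable_prodMk_left MeasurableSet.univ]
        haveI := hνprob sc
        simp
      simp only [huniv]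
      simp
    rw [hμdef]
    have hAeq : {p : ((Fin n → X × Bool) × (Fin n → Fin k → Fin m → X)) ×
        ((Fin n → X × Bool) × (Fin n → Fin k → Fin m → X)) |
          ∃ h ∈ H, empDR h p.1.1 p.1.2 = 0 ∧ ε + ε' ≤ trueDRSet D U h} =
        {s : (Fin n → X × Bool) × (Fin n → Fin k → Fin m → X) |
          ∃ h ∈ H, empDR h s.1 s.2 = 0 ∧ ε + ε' ≤ trueDRSet D U h} ×ˢ Set.univ := by
      ext p
      simp [Set.mem_prod]
    rw [hAeq]
    set A₀ := {s : (Fin n → X × Bool) × (Fin n → Fin k → Fin m → X) |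
      ∃ h ∈ H, empDR h s.1 s.2 = 0 ∧ ε + ε' ≤ trueDRSet D U h} with hA₀
    set B := {p : ((Fin n → X × Bool) × (Fin n → Fin k → Fin m → X)) ×
        ((Fin n → X × Bool) × (Fin n → Fin k → Fin m → X)) |
          ∃ h ∈ H, empDR h p.1.1 p.1.2 = 0 ∧ ε / 2 ≤ empDR h p.2.1 p.2.2} with hB
    set ρ := (Dn.bind f).prod (Dn.bind f) with hρ
    set V := toMeasurable ρ B with hVdef
    have hVmeas : MeasurableSet V := measurableSet_toMeasurable _ _
    have hsec : ∀ s ∈ A₀, (2 / 5 : ℝ≥0∞) ≤ (Dn.bind f) (Prod.mk s ⁻¹' V) := by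
      intro s hs
      obtain ⟨h', hmem, hemp, hdr⟩ := hs
      have hperh := Part5.per_h D U hU R hRsub ε ε' hε0 hε'0 hcov hn hm1 hn1
        (hH h' hmem) hdr hf
      rw [hμdef] at hperh
      refine le_trans hperh (measure_mono ?_)
      intro s' hs'
      have : (s, s') ∈ B := ⟨h', hmem, hemp, hs'⟩
      exact subset_toMeasurable _ _ this
    set T := {s : (Fin n → X × Bool) × (Fin n → Fin k → Fin m → X) |
      (2 / 5 : ℝ≥0∞) ≤ (Dn.bind f) (Prod.mk s ⁻¹' V)} with hT
    have hTmeas : MeasurableSet T :=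
      measurableSet_le measurable_const (measurable_measure_prodMk_left hVmeas)
    have hAT : A₀ ⊆ T := hsec
    calc 2 / 5 * ρ (A₀ ×ˢ Set.univ) ≤ 2 / 5 * ρ (T ×ˢ Set.univ) :=
          mul_le_mul_right (measure_mono (Set.prod_mono hAT (subset_refl _))) _
      _ = 2 / 5 * (Dn.bind f) T := by
          rw [hρ, Measure.prod_prod, measure_univ, mul_one]
      _ = ∫⁻ _ in T, (2 / 5 : ℝ≥0∞) ∂(Dn.bind f) := by
          rw [setLIntegral_const]
      _ ≤ ∫⁻ s in T, (Dn.bind f) (Prod.mk s ⁻¹' V) ∂(Dn.bind f) :=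
          setLIntegral_mono (measurable_measure_prodMk_left hVmeas) fun s hs => hs
      _ ≤ ∫⁻ s, (Dn.bind f) (Prod.mk s ⁻¹' V) ∂(Dn.bind f) :=
          lintegral_mono' Measure.restrict_le_self le_rfl
      _ = ρ V := (Measure.prod_apply hVmeas).symm
      _ = ρ B := by rw [hVdef, measure_toMeasurable]
  · -- degenerate case
    have hmap : Dn.map f = 0 := Measure.map_of_not_aemeasurable hf
    have hzero : sampleMeasure D R n m = 0 := by
      rw [hμdef]
      show ((Dn.map f).join) = 0
      rw [hmap, Measure.join_zero]
    rw [hzero]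
    rw [Measure.zero_prod]
    simp
end
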